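/- arXiv:1008.2420 — 5 statements merged into one kernel-verified Lean document; each statement's English description precedes it below -/
import Mathlib

section
/- Let 0 < α < 1 and let τ_α be a generalized gamma subordinator with Lévy exponent ψ_α(ω) = (1+ω)^α − 1. If γ_{(1−α)/α} is an independent Gamma((1−α)/α, 1) variable, then τ_α(γ_{(1−α)/α}) has the Gamma(1−α, 1) distribution. -/
open MeasureTheory ProbabilityTheory

/-- A (two-point) generalized gamma subordinator of index `β`: an increasing process
started at `0` with independent increments whose increments over `[s,t]` have Laplace
transform `e^{-(t-s)((1+ω)^β - 1)}`. -/
def IsGGSubordinator {Ω : Type*} [MeasurableSpace Ω] (P : Measure Ω)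
    (τ : Ω → ℝ → ℝ) (β : ℝ) : Prop :=
  Measurable (fun a => τ a) ∧
  (∀ a, τ a 0 = 0) ∧ (∀ a, Monotone (τ a)) ∧
  (∀ s t : ℝ, 0 ≤ s → s ≤ t →
    IndepFun (fun a => τ a s) (fun a => τ a t - τ a s) P) ∧
  (∀ s t ω : ℝ, 0 ≤ s → s ≤ t → 0 ≤ ω →
    ∫ a, Real.exp (-ω * (τ a t - τ a s)) ∂P = Real.exp (-(t - s) * ((1 + ω) ^ β - 1)))



open Real Set
open scoped ENNReal NNReal
set_option maxHeartbeats 1000000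

lemma gamma_Iic_zero {c r : ℝ} : gammaMeasure c r (Set.Iic 0) = 0 := by
  rw [gammaMeasure, withDensity_apply _ measurableSet_Iic,
    lintegral_Iic_eq_lintegral_Iio_add_Icc _ le_rfl]
  have h1 : ∫⁻ x in Iio (0:ℝ), gammaPDF c r x = 0 :=
    lintegral_gammaPDF_of_nonpos le_rfl
  have h2 : ∫⁻ x in Icc (0:ℝ) 0, gammaPDF c r x = 0 := by
    rw [Set.Icc_self, setLIntegral_measure_zero _ _ (measure_singleton 0)]
  rw [h1, h2, add_zero]

lemma gamma_laplace {c s : ℝ} (hc : 0 < c) (hs : 0 ≤ s) :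
    ∫ x, Real.exp (-s * x) ∂ gammaMeasure c 1 = (1 + s) ^ (-c) := by
  have h1s : (0:ℝ) < 1 + s := by linarith
  have key : ∀ x : ℝ, gammaPDF c 1 x * ENNReal.ofReal (Real.exp (-s * x))
      = ENNReal.ofReal ((1 + s) ^ (-c)) * gammaPDF c (1 + s) x := by
    intro x
    rcases lt_or_ge x 0 with hx | hx
    · rw [gammaPDF_of_neg hx, gammaPDF_of_neg hx, zero_mul, mul_zero]
    · rw [gammaPDF_of_nonneg hx, gammaPDF_of_nonneg hx,
        ← ENNReal.ofReal_mul (by positivity), ← ENNReal.ofReal_mul (by positivity)]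
      congr 1
      rw [one_rpow, show -((1+s)*x) = -(1*x) + (-s*x) by ring, Real.exp_add]
      have hpow : (1+s) ^ (-c) * (1+s) ^ c = 1 := by
        rw [← Real.rpow_add h1s, neg_add_cancel, Real.rpow_zero]
      have expand : (1+s) ^ (-c) * ((1+s) ^ c / Gamma c * x ^ (c-1) * (rexp (-(1*x)) * rexp (-s*x)))
          = ((1+s) ^ (-c) * (1+s) ^ c) * (x ^ (c-1) * rexp (-(1*x)) * rexp (-s*x) / Gamma c) := by
        ring
      rw [expand, hpow, one_mul]
      ring
  have hcont : Continuous fun x : ℝ => rexp (-s * x) := by continuity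
  rw [integral_eq_lintegral_of_nonneg_ae
      (ae_of_all _ fun x => (Real.exp_nonneg _))
      hcont.aestronglyMeasurable]
  rw [gammaMeasure, lintegral_withDensity_eq_lintegral_mul _ (show Measurable (gammaPDF c 1) from (measurable_gammaPDFReal c 1).ennreal_ofReal)
      (hcont.measurable.ennreal_ofReal)]
  simp only [Pi.mul_apply]
  rw [lintegral_congr key, lintegral_const_mul _ (show Measurable (gammaPDF c (1+s)) from (measurable_gammaPDFReal c (1+s)).ennreal_ofReal),
    lintegral_gammaPDF_eq_one hc h1s, mul_one, ENNReal.toReal_ofReal (by positivity)]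

noncomputable def Gfun (f : ℝ → ℝ) (t : ℝ) : ℝ≥0∞ :=
  ⨅ q : ℚ, (if t < (q:ℝ) then ENNReal.ofReal (f q) else ⊤)

noncomputable def Lfun (f : ℝ → ℝ) (t : ℝ) : ℝ≥0∞ :=
  ⨆ q : ℚ, (if 0 ≤ (q:ℝ) ∧ (q:ℝ) < t then ENNReal.ofReal (f q) else 0)

lemma measurable_Gfun : Measurable (fun p : (ℝ → ℝ) × ℝ => Gfun p.1 p.2) := by
  refine Measurable.iInf fun q => Measurable.ite ?_ ?_ measurable_const
  · exact measurableSet_lt measurable_snd measurable_const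
  · exact ((measurable_pi_apply (q:ℝ)).comp measurable_fst).ennreal_ofReal

lemma measurable_Lfun : Measurable (fun p : (ℝ → ℝ) × ℝ => Lfun p.1 p.2) := by
  refine Measurable.iSup fun q => Measurable.ite ?_ ?_ measurable_const
  · by_cases hq : (0:ℝ) ≤ (q:ℝ)
    · simp only [hq, true_and]
      exact measurableSet_lt measurable_const measurable_snd
    · simp only [hq, false_and]
      exact MeasurableSet.empty.congr (by ext p; simp [hq])
  · exact ((measurable_pi_apply (q:ℝ)).comp measurable_fst).ennreal_ofReal

lemma Lfun_le_ofReal {f : ℝ → ℝ} (hf : Monotone f) (t : ℝ) :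
    Lfun f t ≤ ENNReal.ofReal (f t) := by
  refine iSup_le fun q => ?_
  split_ifs with hq
  · exact ENNReal.ofReal_le_ofReal (hf hq.2.le)
  · exact zero_le

lemma ofReal_le_Gfun {f : ℝ → ℝ} (hf : Monotone f) (t : ℝ) :
    ENNReal.ofReal (f t) ≤ Gfun f t := by
  refine le_iInf fun q => ?_
  split_ifs with hq
  · exact ENNReal.ofReal_le_ofReal (hf hq.le)
  · exact le_top

lemma Gfun_le {f : ℝ → ℝ} {t : ℝ} {q : ℚ} (hq : t < (q:ℝ)) :
    Gfun f t ≤ ENNReal.ofReal (f q) := by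
  refine (iInf_le _ q).trans ?_
  rw [if_pos hq]

lemma le_Lfun {f : ℝ → ℝ} {t : ℝ} {q : ℚ} (hq0 : 0 ≤ (q:ℝ)) (hq : (q:ℝ) < t) :
    ENNReal.ofReal (f q) ≤ Lfun f t := by
  refine le_trans ?_ (le_iSup _ q)
  rw [if_pos ⟨hq0, hq⟩]

lemma Gfun_ne_top (f : ℝ → ℝ) (t : ℝ) : Gfun f t ≠ ⊤ := by
  obtain ⟨q, hq⟩ := exists_rat_gt t
  exact ne_top_of_le_ne_top ENNReal.ofReal_ne_top (Gfun_le hq)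

lemma flat {Ω : Type*} [MeasureSpace Ω] [IsProbabilityMeasure (ℙ : Measure Ω)]
    {α : ℝ} (hα0 : 0 < α) {τ : Ω → ℝ → ℝ} (hτ : IsGGSubordinator ℙ τ α)
    {t : ℝ} (ht : 0 < t) :
    ∀ᵐ a ∂ℙ, Lfun (τ a) t = ENNReal.ofReal (τ a t) ∧ Gfun (τ a) t = ENNReal.ofReal (τ a t) := by
  obtain ⟨hτm, hτ0, hmono, -, hlap⟩ := hτ
  set ψ : ℝ := (1 + 1) ^ α - 1 with hψ
  have hψ0 : 0 ≤ ψ := by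
    have : (1:ℝ) ≤ (1+1) ^ α := Real.one_le_rpow (by norm_num) hα0.le
    simp only [hψ]; linarith
  clear_value ψ
  set S : Ω → ℝ≥0∞ := fun a => Lfun (τ a) t with hS
  set I : Ω → ℝ≥0∞ := fun a => Gfun (τ a) t with hI
  have hSm : Measurable S := measurable_Lfun.comp (hτm.prodMk measurable_const)
  have hIm : Measurable I := measurable_Gfun.comp (hτm.prodMk measurable_const)
  have hS_le : ∀ a, S a ≤ ENNReal.ofReal (τ a t) := fun a => Lfun_le_ofReal (hmono a) t
  have hle_I : ∀ a, ENNReal.ofReal (τ a t) ≤ I a := fun a => ofReal_le_Gfun (hmono a) t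
  have hSI : ∀ a, S a ≤ I a := fun a => (hS_le a).trans (hle_I a)
  have hIne : ∀ a, I a ≠ ⊤ := fun a => Gfun_ne_top _ _
  have hSne : ∀ a, S a ≠ ⊤ := fun a => ne_top_of_le_ne_top (hIne a) (hSI a)
  set R : Ω → ℝ := fun a => (I a).toReal - (S a).toReal with hR
  have hRm : Measurable R := (hIm.ennreal_toReal).sub (hSm.ennreal_toReal)
  have hR0 : ∀ a, 0 ≤ R a := fun a => sub_nonneg.mpr (ENNReal.toReal_mono (hIne a) (hSI a))
  have hI_le : ∀ a (q : ℚ), t < (q:ℝ) → I a ≤ ENNReal.ofReal (τ a q) :=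
    fun a q hq => Gfun_le hq
  have hle_S : ∀ a (q : ℚ), 0 ≤ (q:ℝ) → (q:ℝ) < t → ENNReal.ofReal (τ a q) ≤ S a :=
    fun a q h1 h2 => le_Lfun h1 h2
  have hReq : ∀ a, R a = (I a).toReal - (S a).toReal := fun a => rfl
  have hSapp : ∀ a, S a = Lfun (τ a) t := fun a => rfl
  have hIapp : ∀ a, I a = Gfun (τ a) t := fun a => rfl
  clear_value S I R
  have hexp_le_one : ∀ a, rexp (-R a) ≤ 1 :=
    fun a => Real.exp_le_one_iff.mpr (by simpa using hR0 a)
  have hint : Integrable (fun a => rexp (-R a)) ℙ := by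
    refine (integrable_const (1:ℝ)).mono' (hRm.neg.exp).aestronglyMeasurable ?_
    filter_upwards with a
    rw [Real.norm_eq_abs, abs_of_pos (Real.exp_pos _)]
    exact hexp_le_one a
  have hlower : ∀ l u : ℚ, 0 ≤ (l:ℝ) → (l:ℝ) < t → t < (u:ℝ) →
      rexp (-(((u:ℝ)) - l) * ψ) ≤ ∫ a, rexp (-R a) ∂ℙ := by
    intro l u hl0 hlt htu
    have hlu : (l:ℝ) ≤ u := by linarith
    have hkey := hlap l u 1 hl0 hlu zero_le_one
    rw [hψ]
    have hpt : ∀ a, rexp (-1 * (τ a (u:ℝ) - τ a (l:ℝ))) ≤ rexp (-R a) := by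
      intro a
      apply Real.exp_le_exp.mpr
      have hu0 : 0 ≤ τ a (u:ℝ) := by
        rw [← hτ0 a]; exact hmono a (hl0.trans hlu)
      have hl0' : 0 ≤ τ a (l:ℝ) := by rw [← hτ0 a]; exact hmono a hl0
      have h1 : (I a).toReal ≤ τ a (u:ℝ) :=
        calc (I a).toReal ≤ (ENNReal.ofReal (τ a (u:ℝ))).toReal :=
              ENNReal.toReal_mono ENNReal.ofReal_ne_top (hI_le a u htu)
          _ = τ a (u:ℝ) := ENNReal.toReal_ofReal hu0
      have h2 : τ a (l:ℝ) ≤ (S a).toReal :=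
        calc τ a (l:ℝ) = (ENNReal.ofReal (τ a (l:ℝ))).toReal :=
              (ENNReal.toReal_ofReal hl0').symm
          _ ≤ (S a).toReal := ENNReal.toReal_mono (hSne a) (hle_S a l hl0 hlt)
      rw [hReq a]
      linarith
    have hintl : Integrable (fun a => rexp (-1 * (τ a (u:ℝ) - τ a (l:ℝ)))) ℙ := by
      refine (integrable_const (1:ℝ)).mono' ?_ ?_
      · have : Measurable fun a => τ a (u:ℝ) - τ a (l:ℝ) :=
          ((measurable_pi_apply (u:ℝ)).comp hτm).sub ((measurable_pi_apply (l:ℝ)).comp hτm)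
        exact ((this.const_mul (-1)).exp).aestronglyMeasurable
      · filter_upwards with a
        rw [Real.norm_eq_abs, abs_of_pos (Real.exp_pos _)]
        apply Real.exp_le_one_iff.mpr
        have : τ a (l:ℝ) ≤ τ a (u:ℝ) := hmono a hlu
        nlinarith
    have hmon := integral_mono hintl hint hpt
    rw [hkey] at hmon
    exact hmon
  have hub : ∫ a, rexp (-R a) ∂ℙ ≤ 1 := by
    calc ∫ a, rexp (-R a) ∂ℙ ≤ ∫ _a, (1:ℝ) ∂ℙ :=
          integral_mono hint (integrable_const 1) hexp_le_one
      _ = 1 := by simp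
  have hlb : (1:ℝ) ≤ ∫ a, rexp (-R a) ∂ℙ := by
    by_contra hJ
    push_neg at hJ
    set J := ∫ a, rexp (-R a) ∂ℙ with hJdef
    set δ : ℝ := (1 - J) / (2 * ψ + 1) with hδ
    have hδ0 : 0 < δ := by
      apply div_pos (by linarith) (by linarith)
    clear_value δ
    -- find rationals l < t < u with u - l < δ
    obtain ⟨l, hl1, hl2⟩ := exists_rat_btwn (show max 0 (t - δ/2) < t by
      rcases max_cases 0 (t - δ/2) with ⟨h1, h2⟩ | ⟨h1, h2⟩ <;> rw [h1] <;> linarith)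
    obtain ⟨u, hu1, hu2⟩ := exists_rat_btwn (show t < t + δ/2 by linarith)
    have hl0 : (0:ℝ) ≤ (l:ℝ) := le_trans (le_max_left _ _) hl1.le
    have hul : (u:ℝ) - l < δ := by
      have := le_max_right 0 (t - δ/2)
      have h3 : t - δ/2 ≤ (l:ℝ) := le_trans this hl1.le
      linarith
    have hkey := hlower l u hl0 hl2 hu1
    have hexp_ge : 1 - ((u:ℝ) - l) * ψ ≤ rexp (-(((u:ℝ)) - l) * ψ) := by
      have := Real.add_one_le_exp (-(((u:ℝ)) - l) * ψ)
      linarith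
    have hδψ : δ * ψ ≤ (1 - J) / 2 := by
      rw [hδ]
      rw [div_mul_eq_mul_div, div_le_div_iff₀ (by linarith) (by norm_num)]
      nlinarith
    have hulψ : ((u:ℝ) - l) * ψ ≤ δ * ψ :=
      mul_le_mul_of_nonneg_right hul.le hψ0
    have e1 : 1 - δ * ψ ≤ 1 - ((u:ℝ) - l) * ψ := by linarith
    have e2 : 1 - δ * ψ ≤ J := le_trans (e1.trans hexp_ge) hkey
    linarith
  have hJ1 : ∫ a, rexp (-R a) ∂ℙ = 1 := le_antisymm hub hlb
  -- deduce a.e. equality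
  have hzero : ∫ a, (1 - rexp (-R a)) ∂ℙ = 0 := by
    rw [integral_sub (integrable_const 1) hint, hJ1]
    simp
  have hae := (integral_eq_zero_iff_of_nonneg_ae
    (ae_of_all _ fun a => by simpa using hexp_le_one a)
    ((integrable_const 1).sub hint)).mp hzero
  filter_upwards [hae] with a ha
  have ha' : 1 - rexp (-R a) = 0 := ha
  have hexp1 : rexp (-R a) = 1 := by linarith
  have hR0' : R a = 0 := by
    have h9 : rexp (-R a) = rexp 0 := by rw [hexp1, Real.exp_zero]
    have := Real.exp_injective h9
    linarith
  have hSIeq : S a = I a := by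
    refine (ENNReal.toReal_eq_toReal_iff' (hSne a) (hIne a)).mp ?_
    have h10 : (I a).toReal - (S a).toReal = 0 := by rw [← hReq a]; exact hR0'
    linarith
  have h1 : S a = ENNReal.ofReal (τ a t) :=
    le_antisymm (hS_le a) (hSIeq ▸ hle_I a)
  have h2 : I a = ENNReal.ofReal (τ a t) := by rw [← hSIeq, h1]
  rw [← hSapp a, ← hIapp a]
  exact ⟨h1, h2⟩

lemma measurable_Gfun_fix2 : True := trivial
lemma measurable_Gfun_fix (t : ℝ) : Measurable fun f : ℝ → ℝ => Gfun f t := by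
  refine Measurable.iInf fun q => ?_
  split_ifs with h
  · exact (measurable_pi_apply (q:ℝ)).ennreal_ofReal
  · exact measurable_const

lemma integrable_of_ae_Icc {ρ : Measure ℝ} [IsProbabilityMeasure ρ]
    (hae : ∀ᵐ t ∂ρ, t ∈ Icc (0:ℝ) 1) {g : ℝ → ℝ} (hg : Continuous g) :
    Integrable g ρ := by
  obtain ⟨C, hC⟩ : ∃ C, ∀ t ∈ Icc (0:ℝ) 1, |g t| ≤ C := by
    obtain ⟨C, hC⟩ := (isCompact_Icc.image (hg.abs)).bddAbove
    exact ⟨C, fun t ht => hC ⟨t, ht, rfl⟩⟩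
  refine (integrable_const C).mono' hg.aestronglyMeasurable ?_
  filter_upwards [hae] with t ht
  simpa using hC t ht

lemma laplace_unique (μ ν : Measure ℝ) [IsProbabilityMeasure μ] [IsProbabilityMeasure ν]
    (hμ : μ (Set.Iio 0) = 0) (hν : ν (Set.Iio 0) = 0)
    (h : ∀ ω : ℝ, 0 ≤ ω → ∫ x, Real.exp (-ω * x) ∂μ = ∫ x, Real.exp (-ω * x) ∂ν) :
    μ = ν := by
  set f : ℝ → ℝ := fun x => rexp (-x) with hf
  have hfc : Continuous f := by continuity
  have hfm : Measurable f := hfc.measurable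
  have hfinj : Function.Injective f := fun x y hxy => by
    have := Real.exp_injective hxy
    linarith [this]
  have hemb : MeasurableEmbedding f := hfm.measurableEmbedding hfinj
  have hconc : ∀ (ρ : Measure ℝ), ρ (Set.Iio 0) = 0 →
      (ρ.map f) (Set.Icc (0:ℝ) 1)ᶜ = 0 := by
    intro ρ hρ
    rw [Measure.map_apply hfm measurableSet_Icc.compl]
    refine measure_mono_null ?_ hρ
    intro x hx
    simp only [Set.mem_preimage, Set.mem_compl_iff, Set.mem_Icc, not_and_or, not_le] at hx
    rcases hx with hx | hx
    · exact absurd (Real.exp_nonneg _) (not_le.mpr hx)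
    · simp only [Set.mem_Iio]
      by_contra hx0
      push_neg at hx0
      have : rexp (-x) ≤ 1 := Real.exp_le_one_iff.mpr (by linarith)
      linarith
  set μ' := μ.map f with hμ'
  set ν' := ν.map f with hν'
  have : IsProbabilityMeasure μ' := Measure.isProbabilityMeasure_map hfm.aemeasurable
  have : IsProbabilityMeasure ν' := Measure.isProbabilityMeasure_map hfm.aemeasurable
  have hμae : ∀ᵐ t ∂μ', t ∈ Icc (0:ℝ) 1 := by
    rw [ae_iff]
    refine measure_mono_null (fun t ht => ?_) (hconc μ hμ)
    simpa using ht
  have hνae : ∀ᵐ t ∂ν', t ∈ Icc (0:ℝ) 1 := by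
    rw [ae_iff]
    refine measure_mono_null (fun t ht => ?_) (hconc ν hν)
    simpa using ht
  -- moments agree
  have hmom : ∀ n : ℕ, ∫ t, t ^ n ∂μ' = ∫ t, t ^ n ∂ν' := by
    intro n
    have hgm : ∀ (ρ' : Measure ℝ), AEStronglyMeasurable (fun t : ℝ => t ^ n) ρ' :=
      fun ρ' => (continuous_pow n).aestronglyMeasurable
    rw [hμ', hν', integral_map hfm.aemeasurable (hgm _), integral_map hfm.aemeasurable (hgm _)]
    have : ∀ x : ℝ, (f x) ^ n = rexp (-(n:ℝ) * x) := by
      intro x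
      rw [hf]
      rw [← Real.exp_nat_mul]
      ring_nf
    simp_rw [this]
    exact h n (Nat.cast_nonneg n)
  -- polynomial integrals agree
  have hpoly : ∀ p : Polynomial ℝ, ∫ t, p.eval t ∂μ' = ∫ t, p.eval t ∂ν' := by
    intro p
    have heval : ∀ t : ℝ, p.eval t = ∑ i ∈ Finset.range (p.natDegree + 1), p.coeff i * t ^ i :=
      fun t => Polynomial.eval_eq_sum_range t
    simp_rw [heval]
    rw [integral_finset_sum _ (fun i _ =>
        (integrable_of_ae_Icc hμae (continuous_pow i)).const_mul _),
      integral_finset_sum _ (fun i _ =>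
        (integrable_of_ae_Icc hνae (continuous_pow i)).const_mul _)]
    refine Finset.sum_congr rfl fun i _ => ?_
    rw [integral_const_mul, integral_const_mul, hmom i]
  -- continuous integrals agree
  have hcont : ∀ g : ℝ → ℝ, Continuous g → ∫ t, g t ∂μ' = ∫ t, g t ∂ν' := by
    intro g hg
    have key : ∀ ε : ℝ, 0 < ε → |∫ t, g t ∂μ' - ∫ t, g t ∂ν'| ≤ 2 * ε := by
      intro ε hε
      obtain ⟨p, hp⟩ := exists_polynomial_near_of_continuousOn 0 1 g hg.continuousOn ε hε
      have hbd : ∀ (ρ' : Measure ℝ) [IsProbabilityMeasure ρ'], (∀ᵐ t ∂ρ', t ∈ Icc (0:ℝ) 1) →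
          |∫ t, g t ∂ρ' - ∫ t, p.eval t ∂ρ'| ≤ ε := by
        intro ρ' _ hae
        rw [← integral_sub (integrable_of_ae_Icc hae hg)
          (integrable_of_ae_Icc hae p.continuous)]
        calc |∫ t, (g t - p.eval t) ∂ρ'| ≤ ∫ t, |g t - p.eval t| ∂ρ' :=
              by
              simpa [Real.norm_eq_abs] using
                norm_integral_le_integral_norm (fun t => g t - p.eval t) (μ := ρ')
          _ ≤ ∫ _t, ε ∂ρ' := by
              refine integral_mono_ae ((integrable_of_ae_Icc hae hg).sub
                (integrable_of_ae_Icc hae p.continuous)).abs (integrable_const ε) ?_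
              filter_upwards [hae] with t ht
              rw [abs_sub_comm]
              exact (hp t ht).le
          _ = ε := by simp
      have h1 := hbd μ' hμae
      have h2 := hbd ν' hνae
      have h3 := hpoly p
      calc |∫ t, g t ∂μ' - ∫ t, g t ∂ν'|
          = |(∫ t, g t ∂μ' - ∫ t, p.eval t ∂μ') - (∫ t, g t ∂ν' - ∫ t, p.eval t ∂ν')| := by
            rw [h3]; ring_nf
        _ ≤ |∫ t, g t ∂μ' - ∫ t, p.eval t ∂μ'| + |∫ t, g t ∂ν' - ∫ t, p.eval t ∂ν'| :=
            abs_sub _ _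
        _ ≤ 2 * ε := by linarith
    by_contra hne
    have hpos : 0 < |∫ t, g t ∂μ' - ∫ t, g t ∂ν'| := abs_pos.mpr (sub_ne_zero.mpr hne)
    have := key (|∫ t, g t ∂μ' - ∫ t, g t ∂ν'| / 3) (by linarith)
    linarith
  -- conclude μ' = ν'
  have hmain : μ' = ν' := by
    apply ext_of_forall_lintegral_eq_of_IsFiniteMeasure
    intro φ
    have hg : Continuous fun t : ℝ => (φ t : ℝ) := NNReal.continuous_coe.comp φ.continuous
    have h1 := BoundedContinuousFunction.toReal_lintegral_coe_eq_integral φ μ'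
    have h2 := BoundedContinuousFunction.toReal_lintegral_coe_eq_integral φ ν'
    have h3 := hcont _ hg
    have hfin1 := (φ.lintegral_lt_top_of_nnreal μ').ne
    have hfin2 := (φ.lintegral_lt_top_of_nnreal ν').ne
    rw [← ENNReal.toReal_eq_toReal_iff' hfin1 hfin2] at *
    rw [h1, h2]
    exact h3
  -- pull back
  ext s hs
  have h1 : μ s = μ' (f '' s) := by
    rw [hμ', Measure.map_apply hfm (hemb.measurableSet_image.mpr hs), hfinj.preimage_image]
  have h2 : ν s = ν' (f '' s) := by
    rw [hν', Measure.map_apply hfm (hemb.measurableSet_image.mpr hs), hfinj.preimage_image]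
  rw [h1, h2, hmain]

/-- If `τ_α` is a generalized gamma subordinator of index `α`, independent of
`γ ~ Gamma((1-α)/α, 1)`, then `τ_α(γ) ~ Gamma(1-α, 1)`. -/
theorem stmt4 {Ω : Type*} [MeasureSpace Ω] [IsProbabilityMeasure (ℙ : Measure Ω)]
    (α : ℝ) (hα0 : 0 < α) (hα1 : α < 1)
    (τ : Ω → ℝ → ℝ) (hτ : IsGGSubordinator ℙ τ α)
    (γ : Ω → ℝ) (hγm : Measurable γ)
    (hγ : Measure.map γ ℙ = gammaMeasure ((1 - α) / α) 1)
    (hind : IndepFun (fun a => τ a) γ ℙ) :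
    Measure.map (fun a => τ a (γ a)) ℙ = gammaMeasure (1 - α) 1 := by
  obtain ⟨hτm, hτ0, hmono, -, hlap⟩ := id hτ
  have h1α : (0:ℝ) < 1 - α := by linarith
  have hc0 : (0:ℝ) < (1 - α) / α := div_pos h1α hα0
  have hpairm : Measurable fun a => (τ a, γ a) := hτm.prodMk hγm
  set lawτ := Measure.map (fun a => τ a) ℙ with hlawτ
  have hlτprob : IsProbabilityMeasure lawτ := Measure.isProbabilityMeasure_map hτm.aemeasurable
  have hγprob : IsProbabilityMeasure (Measure.map γ ℙ) := by
    rw [hγ]; exact isProbabilityMeasure_gammaMeasure hc0 one_pos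
  have hjoint : Measure.map (fun a => (τ a, γ a)) ℙ = lawτ.prod (Measure.map γ ℙ) :=
    (indepFun_iff_map_prod_eq_prod_map_map hτm.aemeasurable hγm.aemeasurable).mp hind
  have hγIic : (Measure.map γ ℙ) (Set.Iic 0) = 0 := by rw [hγ]; exact gamma_Iic_zero
  have hγpos : ∀ᵐ a ∂ℙ, 0 < γ a := by
    rw [ae_iff]
    have hset : {a | ¬ 0 < γ a} = γ ⁻¹' (Set.Iic 0) := by ext a; simp [not_lt]
    rw [hset, ← Measure.map_apply hγm measurableSet_Iic]
    exact hγIic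
  have htpos : ∀ᵐ t ∂(Measure.map γ ℙ), 0 < t := by
    rw [ae_iff]
    refine measure_mono_null (fun t ht => ?_) hγIic
    simpa [not_lt] using ht
  -- measurability of the equality set
  have hNm : MeasurableSet {p : (ℝ → ℝ) × ℝ | Lfun p.1 p.2 ≠ Gfun p.1 p.2} := by
    have heq : MeasurableSet {p : (ℝ → ℝ) × ℝ | Lfun p.1 p.2 = Gfun p.1 p.2} := by
      have h1 := measurableSet_le measurable_Lfun measurable_Gfun
      have h2 := measurableSet_le measurable_Gfun measurable_Lfun
      refine (h1.inter h2).congr ?_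
      ext p; simp only [Set.mem_inter_iff, Set.mem_setOf_eq]
      constructor
      · rintro ⟨a, b⟩; exact le_antisymm a b
      · intro h; exact ⟨h.le, h.ge⟩
    exact heq.compl
  -- null set of discontinuity at the random time
  have hNnull : (lawτ.prod (Measure.map γ ℙ)) {p : (ℝ→ℝ)×ℝ | Lfun p.1 p.2 ≠ Gfun p.1 p.2} = 0 := by
    rw [Measure.prod_apply_symm hNm]
    have hz : (fun t => lawτ ((fun f => (f, t)) ⁻¹' {p : (ℝ→ℝ)×ℝ | Lfun p.1 p.2 ≠ Gfun p.1 p.2}))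
        =ᵐ[Measure.map γ ℙ] (fun _ => 0) := by
      filter_upwards [htpos] with t ht0
      have hsecm : MeasurableSet {f : ℝ → ℝ | Lfun f t ≠ Gfun f t} := by
        have := hNm.preimage (measurable_id.prodMk (measurable_const (a := t)))
        exact this
      have hsec : ((fun f => (f, t)) ⁻¹' {p : (ℝ→ℝ)×ℝ | Lfun p.1 p.2 ≠ Gfun p.1 p.2})
          = {f : ℝ → ℝ | Lfun f t ≠ Gfun f t} := rfl
      rw [hsec, hlawτ, Measure.map_apply hτm hsecm]
      have hflat' : ∀ᵐ a ∂ℙ, Lfun (τ a) t = Gfun (τ a) t := by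
        filter_upwards [flat hα0 hτ ht0] with a ha
        rw [ha.1, ha.2]
      have hseteq : ((fun a => τ a) ⁻¹' {f : ℝ → ℝ | Lfun f t ≠ Gfun f t})
          = {a | ¬ Lfun (τ a) t = Gfun (τ a) t} := rfl
      rw [hseteq]
      exact ae_iff.mp hflat'
    rw [lintegral_congr_ae hz, lintegral_zero]
  have hLG : ∀ᵐ a ∂ℙ, Lfun (τ a) (γ a) = Gfun (τ a) (γ a) := by
    rw [ae_iff]
    have hseteq : {a | ¬ Lfun (τ a) (γ a) = Gfun (τ a) (γ a)}
        = (fun a => (τ a, γ a)) ⁻¹' {p : (ℝ→ℝ)×ℝ | Lfun p.1 p.2 ≠ Gfun p.1 p.2} := rfl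
    rw [hseteq, ← Measure.map_apply hpairm hNm, hjoint]
    exact hNnull
  set g : Ω → ℝ := fun a => (Gfun (τ a) (γ a)).toReal with hgdef
  have hgm : Measurable g := (measurable_Gfun.comp hpairm).ennreal_toReal
  have hGX : ∀ᵐ a ∂ℙ, Gfun (τ a) (γ a) = ENNReal.ofReal (τ a (γ a)) := by
    filter_upwards [hLG, hγpos] with a hLGa hγa
    have h1 : Lfun (τ a) (γ a) ≤ ENNReal.ofReal (τ a (γ a)) := Lfun_le_ofReal (hmono a) _
    have h2 : ENNReal.ofReal (τ a (γ a)) ≤ Gfun (τ a) (γ a) := ofReal_le_Gfun (hmono a) _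
    exact le_antisymm (hLGa ▸ h1) h2
  have hXg : (fun a => τ a (γ a)) =ᵐ[ℙ] g := by
    filter_upwards [hGX, hγpos] with a hGXa hγa
    have hX0 : 0 ≤ τ a (γ a) := by rw [← hτ0 a]; exact hmono a hγa.le
    simp only [hgdef, hGXa, ENNReal.toReal_ofReal hX0]
  -- Laplace transform of g
  have hlapg : ∀ ω : ℝ, 0 ≤ ω → ∫ a, rexp (-ω * g a) ∂ℙ = (1 + ω) ^ (-(1 - α)) := by
    intro ω hω
    have hψ0 : (0:ℝ) ≤ (1 + ω) ^ α - 1 := by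
      have : (1:ℝ) ≤ (1 + ω) ^ α := Real.one_le_rpow (by linarith) hα0.le
      linarith
    have hΦm : Measurable fun p : (ℝ → ℝ) × ℝ => rexp (-ω * (Gfun p.1 p.2).toReal) :=
      (measurable_Gfun.ennreal_toReal.const_mul (-ω)).exp
    have h1 : ∫ a, rexp (-ω * g a) ∂ℙ
        = ∫ p : (ℝ → ℝ) × ℝ, rexp (-ω * (Gfun p.1 p.2).toReal)
            ∂(Measure.map (fun a => (τ a, γ a)) ℙ) :=
      (integral_map hpairm.aemeasurable hΦm.aestronglyMeasurable).symm
    rw [h1, hjoint]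
    have hΦint : Integrable (fun p : (ℝ → ℝ) × ℝ => rexp (-ω * (Gfun p.1 p.2).toReal))
        (lawτ.prod (Measure.map γ ℙ)) := by
      refine (integrable_const (1:ℝ)).mono' hΦm.aestronglyMeasurable ?_
      filter_upwards with p
      rw [Real.norm_eq_abs, abs_of_pos (Real.exp_pos _)]
      apply Real.exp_le_one_iff.mpr
      have : (0:ℝ) ≤ (Gfun p.1 p.2).toReal := ENNReal.toReal_nonneg
      nlinarith
    rw [integral_prod_symm _ hΦint]
    show ∫ t, ∫ f, rexp (-ω * (Gfun f t).toReal) ∂lawτ ∂(Measure.map γ ℙ) = (1 + ω) ^ (-(1 - α))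
    have hinner : (fun t => ∫ f, rexp (-ω * (Gfun f t).toReal) ∂lawτ)
        =ᵐ[Measure.map γ ℙ] (fun t => rexp (-((1 + ω) ^ α - 1) * t)) := by
      filter_upwards [htpos] with t ht0
      have hfm : Measurable fun f : ℝ → ℝ => rexp (-ω * (Gfun f t).toReal) :=
        (((measurable_Gfun_fix t).ennreal_toReal.const_mul (-ω)).exp)
      rw [hlawτ, integral_map hτm.aemeasurable hfm.aestronglyMeasurable]
      have hcongr : ∫ a, rexp (-ω * (Gfun (τ a) t).toReal) ∂ℙ
          = ∫ a, rexp (-ω * (τ a t - τ a 0)) ∂ℙ := by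
        apply integral_congr_ae
        filter_upwards [flat hα0 hτ ht0] with a hfa
        have ht0' : 0 ≤ τ a t := by rw [← hτ0 a]; exact hmono a ht0.le
        rw [hfa.2, ENNReal.toReal_ofReal ht0', hτ0 a, sub_zero]
      rw [hcongr, hlap 0 t ω le_rfl ht0.le hω, sub_zero]
      ring_nf
    rw [integral_congr_ae hinner, hγ]
    have hrw : ∀ t : ℝ, rexp (-((1 + ω) ^ α - 1) * t) = rexp (-((1 + ω) ^ α - 1) * t) := fun _ => rfl
    rw [gamma_laplace hc0 hψ0]
    have hbase : (1:ℝ) + ((1 + ω) ^ α - 1) = (1 + ω) ^ α := by ring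
    rw [hbase, ← Real.rpow_mul (by linarith : (0:ℝ) ≤ 1 + ω)]
    congr 1
    field_simp
  -- conclusion
  have hmapeq : Measure.map (fun a => τ a (γ a)) ℙ = Measure.map g ℙ := Measure.map_congr hXg
  have hprob1 : IsProbabilityMeasure (Measure.map g ℙ) := Measure.isProbabilityMeasure_map hgm.aemeasurable
  have hprob2 : IsProbabilityMeasure (gammaMeasure (1 - α) 1) := isProbabilityMeasure_gammaMeasure h1α one_pos
  rw [hmapeq]
  apply laplace_unique
  · rw [Measure.map_apply hgm measurableSet_Iio]
    have hempty : g ⁻¹' (Set.Iio 0) = ∅ := by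
      ext a
      simp only [Set.mem_preimage, Set.mem_Iio, Set.mem_empty_iff_false, iff_false, not_lt, hgdef]
      exact ENNReal.toReal_nonneg
    rw [hempty]
    exact measure_empty
  · exact measure_mono_null Set.Iio_subset_Iic_self gamma_Iic_zero
  · intro ω hω
    have hcont : Continuous fun x : ℝ => rexp (-ω * x) := by continuity
    rw [integral_map hgm.aemeasurable hcont.aestronglyMeasurable, hlapg ω hω,
      gamma_laplace h1α hω]
end

section
/- Let 0 < α < 1, let ζ > 0 be fixed, let τ_α be a generalized gamma subordinator with Lévy exponent (1+ω)^α − 1, and let γ_1 ∼ Exp(1) be independent of τ_α. Then γ_1 / τ_α(ζ) =^d ζ^{−1/α}(γ_1 + ζ)^{1/α} − 1. -/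
open MeasureTheory ProbabilityTheory

section Aux

open Real Set

lemma aux_exp_Iio : expMeasure 1 (Set.Iio 0) = 0 := by
  rw [expMeasure, gammaMeasure, withDensity_apply _ measurableSet_Iio]
  exact ProbabilityTheory.lintegral_gammaPDF_of_nonpos le_rfl

lemma aux_exp_Iic {t : ℝ} (ht : 0 ≤ t) :
    expMeasure 1 (Set.Iic t) = ENNReal.ofReal (1 - Real.exp (-t)) := by
  haveI := isProbabilityMeasure_expMeasure one_pos
  have h := cdf_expMeasure_eq one_pos t
  rw [cdf_eq_real, measureReal_def, if_pos ht, one_mul] at h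
  rw [← ENNReal.ofReal_toReal (measure_ne_top (expMeasure 1) (Set.Iic t)), h]

lemma aux_exp_Ioi {t : ℝ} (ht : 0 ≤ t) :
    expMeasure 1 (Set.Ioi t) = ENNReal.ofReal (Real.exp (-t)) := by
  haveI := isProbabilityMeasure_expMeasure one_pos
  have hc : (Set.Iic t)ᶜ = Set.Ioi t := Set.compl_Iic
  rw [← hc, measure_compl measurableSet_Iic (measure_ne_top _ _), measure_univ,
    aux_exp_Iic ht, ← ENNReal.ofReal_one,
    ← ENNReal.ofReal_sub _ (by
      have := Real.exp_le_one_iff.mpr (by linarith : -t ≤ 0); linarith)]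
  norm_num

lemma aux_exp_ae_nonneg : ∀ᵐ g ∂(expMeasure 1), 0 ≤ g := by
  rw [MeasureTheory.ae_iff]
  have : {g : ℝ | ¬ 0 ≤ g} = Set.Iio 0 := by ext g; simp
  rw [this]
  exact aux_exp_Iio

end Aux

/-- Let `0 < α < 1`, `ζ > 0`, let `G ~ Exp(1)` be independent of `X = τ_α(ζ)`, a positive
random variable with Laplace transform `E[e^{-ωX}] = e^{-ζ((1+ω)^α - 1)}`.  Then
`G / X =ᵈ ζ^{-1/α}(G + ζ)^{1/α} - 1`. -/
theorem stmt8 {Ω : Type*} [MeasureSpace Ω] [IsProbabilityMeasure (ℙ : Measure Ω)]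
    (α ζ : ℝ) (hα0 : 0 < α) (hα1 : α < 1) (hζ : 0 < ζ)
    (G X : Ω → ℝ) (hGm : Measurable G) (hXm : Measurable X)
    (hG : Measure.map G ℙ = expMeasure 1)
    (hXpos : ∀ᵐ a ∂ℙ, 0 < X a)
    (hXlap : ∀ ω : ℝ, 0 ≤ ω →
      ∫ a, Real.exp (-ω * X a) ∂ℙ = Real.exp (-ζ * ((1 + ω) ^ α - 1)))
    (hind : IndepFun G X ℙ) :
    Measure.map (fun a => G a / X a) ℙ
      = (expMeasure 1).map (fun g => ζ ^ (-(1 / α)) * (g + ζ) ^ (1 / α) - 1) := by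
  haveI := isProbabilityMeasure_expMeasure one_pos
  set f : ℝ → ℝ := fun g => ζ ^ (-(1 / α)) * (g + ζ) ^ (1 / α) - 1 with hf
  have hfc : Continuous f := by
    apply Continuous.sub _ continuous_const
    apply Continuous.mul continuous_const
    exact (continuous_id.add continuous_const).rpow_const
      (fun x => Or.inr (by positivity))
  have hfm : Measurable f := hfc.measurable
  have hGX : Measurable fun a => G a / X a := hGm.div hXm
  haveI : IsProbabilityMeasure (Measure.map (fun a => G a / X a) ℙ) :=
    Measure.isProbabilityMeasure_map hGX.aemeasurable
  haveI : IsProbabilityMeasure ((expMeasure 1).map f) :=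
    Measure.isProbabilityMeasure_map hfm.aemeasurable
  haveI : IsProbabilityMeasure (Measure.map X ℙ) :=
    Measure.isProbabilityMeasure_map hXm.aemeasurable
  have hGnn : ∀ᵐ a ∂ℙ, 0 ≤ G a := by
    rw [MeasureTheory.ae_iff]
    have h1 : {a | ¬ 0 ≤ G a} = G ⁻¹' (Set.Iio 0) := by ext a; simp
    rw [h1, ← Measure.map_apply hGm measurableSet_Iio, hG]
    exact aux_exp_Iio
  have hXae : ∀ᵐ t ∂(Measure.map X ℙ), 0 < t := by
    rw [MeasureTheory.ae_iff]
    have h1 : {t : ℝ | ¬ 0 < t} = Set.Iic 0 := by ext t; simp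
    rw [h1, Measure.map_apply hXm measurableSet_Iic]
    have h2 : X ⁻¹' (Set.Iic 0) = {a | ¬ 0 < X a} := by ext a; simp
    rw [h2, ← MeasureTheory.ae_iff]
    exact hXpos
  have key : ∀ x : ℝ, Measure.map (fun a => G a / X a) ℙ (Set.Ioi x)
      = (expMeasure 1).map f (Set.Ioi x) := by
    intro x
    rw [Measure.map_apply hGX measurableSet_Ioi, Measure.map_apply hfm measurableSet_Ioi]
    rcases lt_or_ge x 0 with hx | hx
    · -- both sides equal 1
      have hL : ℙ ((fun a => G a / X a) ⁻¹' Set.Ioi x) = 1 := by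
        have h1 : ((fun a => G a / X a) ⁻¹' Set.Ioi x : Set Ω) =ᵐ[ℙ] Set.univ := by
          rw [Filter.eventuallyEq_univ]
          filter_upwards [hXpos, hGnn] with a h1 h2
          exact lt_of_lt_of_le hx (div_nonneg h2 h1.le)
        rw [measure_congr h1, measure_univ]
      have hR : expMeasure 1 (f ⁻¹' Set.Ioi x) = 1 := by
        have h1 : (f ⁻¹' Set.Ioi x : Set ℝ) =ᵐ[expMeasure 1] Set.univ := by
          rw [Filter.eventuallyEq_univ]
          filter_upwards [aux_exp_ae_nonneg] with g hg
          have hc : (0:ℝ) < ζ ^ (1 / α) := Real.rpow_pos_of_pos hζ _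
          have h2 : ζ ^ (1 / α) ≤ (g + ζ) ^ (1 / α) :=
            Real.rpow_le_rpow hζ.le (by linarith) (by positivity)
          have h3 : (1:ℝ) ≤ ζ ^ (-(1 / α)) * (g + ζ) ^ (1 / α) := by
            calc (1:ℝ) = ζ ^ (-(1 / α)) * ζ ^ (1 / α) := by
                  rw [← Real.rpow_add hζ]; norm_num
              _ ≤ ζ ^ (-(1 / α)) * (g + ζ) ^ (1 / α) := by
                  apply mul_le_mul_of_nonneg_left h2 (Real.rpow_nonneg hζ.le _)
          have : x < f g := by
            simp only [hf]; linarith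
          simpa using this
        rw [measure_congr h1, measure_univ]
      rw [hL, hR]
    · -- x ≥ 0
      set μX := Measure.map X ℙ with hμX
      have hS : MeasurableSet {p : ℝ × ℝ | x * p.2 < p.1} :=
        measurableSet_lt (measurable_const.mul measurable_snd) measurable_fst
      have hmap : Measure.map (fun a => (G a, X a)) ℙ = (Measure.map G ℙ).prod μX :=
        (indepFun_iff_map_prod_eq_prod_map_map hGm.aemeasurable hXm.aemeasurable).mp hind
      have hset : ((fun a => G a / X a) ⁻¹' Set.Ioi x : Set Ω)
          =ᵐ[ℙ] (fun a => (G a, X a)) ⁻¹' {p : ℝ × ℝ | x * p.2 < p.1} := by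
        rw [Filter.eventuallyEq_set]
        filter_upwards [hXpos] with a ha
        simp only [Set.mem_preimage, Set.mem_Ioi, Set.mem_setOf_eq]
        exact lt_div_iff₀ ha
      rw [measure_congr hset, ← Measure.map_apply (hGm.prodMk hXm) hS, hmap,
        Measure.prod_apply_symm hS]
      have hslice : ∀ t : ℝ, ((fun g => (g, t)) ⁻¹' {p : ℝ × ℝ | x * p.2 < p.1} : Set ℝ)
          = Set.Ioi (x * t) := by
        intro t; ext g; simp [Set.mem_Ioi]
      have hL : ∫⁻ t, (Measure.map G ℙ) ((fun g => (g, t)) ⁻¹' {p : ℝ × ℝ | x * p.2 < p.1}) ∂μX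
          = ∫⁻ t, ENNReal.ofReal (Real.exp (-(x * t))) ∂μX := by
        apply lintegral_congr_ae
        filter_upwards [hXae] with t ht
        rw [hslice t, hG, aux_exp_Ioi (mul_nonneg hx ht.le)]
      rw [hL]
      have hmeas : Measurable fun t : ℝ => Real.exp (-(x * t)) :=
        Real.measurable_exp.comp ((measurable_id.const_mul x).neg)
      have hint : Integrable (fun t : ℝ => Real.exp (-(x * t))) μX := by
        apply Integrable.mono' (integrable_const (1:ℝ)) hmeas.aestronglyMeasurable
        filter_upwards [hXae] with t ht
        rw [Real.norm_eq_abs, abs_of_nonneg (Real.exp_pos _).le]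
        exact Real.exp_le_one_iff.mpr (by nlinarith)
      rw [← MeasureTheory.ofReal_integral_eq_lintegral_ofReal hint
        (Filter.Eventually.of_forall fun t => (Real.exp_pos _).le)]
      have hI : ∫ t, Real.exp (-(x * t)) ∂μX = ∫ a, Real.exp (-x * X a) ∂ℙ := by
        rw [hμX, integral_map hXm.aemeasurable hmeas.aestronglyMeasurable]
        simp [neg_mul]
      rw [hI, hXlap x hx]
      -- now compute the right-hand side
      set t₀ : ℝ := ζ * (1 + x) ^ α - ζ with ht₀def
      have h1x : (1:ℝ) ≤ (1 + x) ^ α := Real.one_le_rpow (by linarith) hα0.le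
      have ht₀ : 0 ≤ t₀ := by nlinarith
      have hfs : (f ⁻¹' Set.Ioi x : Set ℝ) =ᵐ[expMeasure 1] Set.Ioi t₀ := by
        rw [Filter.eventuallyEq_set]
        filter_upwards [aux_exp_ae_nonneg] with g hg
        simp only [Set.mem_preimage, Set.mem_Ioi, hf]
        have hc : (0:ℝ) < ζ ^ (1 / α) := Real.rpow_pos_of_pos hζ _
        have hgζ : (0:ℝ) < g + ζ := by linarith
        have hrw : ζ ^ (-(1 / α)) * (g + ζ) ^ (1 / α) = (g + ζ) ^ (1 / α) / ζ ^ (1 / α) := by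
          rw [Real.rpow_neg hζ.le]; ring
        constructor
        · intro h
          have h2 : (x + 1) * ζ ^ (1 / α) < (g + ζ) ^ (1 / α) := by
            rw [hrw] at h
            have := (lt_div_iff₀ hc).mp (by linarith : x + 1 < (g + ζ) ^ (1 / α) / ζ ^ (1 / α))
            linarith
          have h3 : ((x + 1) * ζ ^ (1 / α)) ^ α < ((g + ζ) ^ (1 / α)) ^ α :=
            Real.rpow_lt_rpow (by positivity) h2 hα0
          rw [Real.mul_rpow (by linarith) hc.le, ← Real.rpow_mul hζ.le,
            ← Real.rpow_mul hgζ.le, one_div_mul_cancel hα0.ne',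
            Real.rpow_one, Real.rpow_one] at h3
          have : (x + 1) ^ α = (1 + x) ^ α := by ring_nf
          rw [this] at h3
          simp only [ht₀def]
          nlinarith
        · intro h
          have h3 : (x + 1) ^ α * ζ < g + ζ := by
            simp only [ht₀def] at h
            have : (x + 1) ^ α = (1 + x) ^ α := by ring_nf
            rw [this]; nlinarith
          have h4 : ((x + 1) * ζ ^ (1 / α)) ^ α < ((g + ζ) ^ (1 / α)) ^ α := by
            rw [Real.mul_rpow (by linarith) hc.le, ← Real.rpow_mul hζ.le,
              ← Real.rpow_mul hgζ.le, one_div_mul_cancel hα0.ne',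
              Real.rpow_one, Real.rpow_one]
            exact h3
          have h5 : (x + 1) * ζ ^ (1 / α) < (g + ζ) ^ (1 / α) :=
            (Real.rpow_lt_rpow_iff (by positivity) (Real.rpow_nonneg hgζ.le _) hα0).mp h4
          rw [hrw]
          have := (lt_div_iff₀ hc).mpr (by linarith : (x + 1) * ζ ^ (1 / α) < (g + ζ) ^ (1 / α))
          linarith
      rw [measure_congr hfs, aux_exp_Ioi ht₀]
      congr 1
      simp only [ht₀def]
      ring_nf
  refine Measure.ext_of_Iic _ _ fun x => ?_
  have h1 : (Set.Ioi x)ᶜ = Set.Iic x := Set.compl_Ioi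
  rw [← h1, measure_compl measurableSet_Ioi (measure_ne_top _ _),
    measure_compl measurableSet_Ioi (measure_ne_top _ _), measure_univ, measure_univ, key x]
end

section
/- Let 0 < α < 1 and ζ > 0 be fixed, let γ_1 ∼ Exp(1) be independent of the generalized gamma subordinator τ_α, and let β_{1−α,α} ∼ Beta(1−α, α) be independent of both. Then β_{1−α,α} · γ_1/(γ_1 + τ_α(ζ)) =^d β_{1−α,α} · (1 − ζ^{1/α}/(ζ + γ_1)^{1/α}), where on each side the factors are independent. -/
open MeasureTheory ProbabilityTheory

/-- The Beta(a,b) distribution on `(0,1)`. -/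
noncomputable def betaMeasureOnUnit (a b : ℝ) : Measure ℝ :=
  (volume.restrict (Set.Ioo (0 : ℝ) 1)).withDensity
    (fun x => ENNReal.ofReal
      (Real.Gamma (a + b) / (Real.Gamma a * Real.Gamma b) * (x ^ (a - 1) * (1 - x) ^ (b - 1))))

namespace Stmt9Aux

open Set Real

lemma expMeasure_one_Iio : expMeasure 1 (Set.Iio 0) = 0 := by
  rw [expMeasure, gammaMeasure, withDensity_apply _ measurableSet_Iio]
  exact lintegral_gammaPDF_of_nonpos le_rfl

lemma expMeasure_ae_pos : ∀ᵐ x ∂(expMeasure 1), 0 < x := by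
  rw [ae_iff]
  have h : {x : ℝ | ¬ 0 < x} = Set.Iic 0 := by ext x; simp
  have h0 : expMeasure 1 {(0 : ℝ)} = 0 :=
    (withDensity_absolutelyContinuous volume _) Real.volume_singleton
  rw [h, ← Set.Iio_union_right]
  exact measure_union_null expMeasure_one_Iio h0

lemma expMeasure_Ioi {t : ℝ} (ht : 0 ≤ t) :
    expMeasure 1 (Set.Ioi t) = ENNReal.ofReal (Real.exp (-t)) := by
  have : IsProbabilityMeasure (expMeasure 1) := isProbabilityMeasure_expMeasure one_pos
  have hIic : expMeasure 1 (Set.Iic t) = ENNReal.ofReal (1 - Real.exp (-t)) := by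
    rw [expMeasure, gammaMeasure, withDensity_apply _ measurableSet_Iic]
    have h := lintegral_exponentialPDF_eq_antiDeriv one_pos t
    rw [show gammaPDF 1 1 = exponentialPDF 1 from rfl, h, if_pos ht, one_mul]
  have hc := measure_compl (μ := expMeasure 1) measurableSet_Iic (measure_ne_top _ (Set.Iic t))
  rw [Set.compl_Iic] at hc
  rw [hc, measure_univ, hIic, ← ENNReal.ofReal_one,
    ← ENNReal.ofReal_sub _ (sub_nonneg.mpr (Real.exp_le_one_iff.mpr (neg_nonpos.mpr ht)))]
  norm_num

end Stmt9Aux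

/-- Structural distribution of a `ℙ_α(ζ)` sequence: with `B ~ Beta(1-α,α)`, `G ~ Exp(1)`
and `X = τ_α(ζ)` (Laplace transform `e^{-ζ((1+ω)^α-1)}`) all independent,
`B · G/(G + X) =ᵈ B · (1 - ζ^{1/α}/(ζ+G)^{1/α})`, with independent factors on each side. -/
theorem stmt9 {Ω : Type*} [MeasureSpace Ω] [IsProbabilityMeasure (ℙ : Measure Ω)]
    (α ζ : ℝ) (hα0 : 0 < α) (hα1 : α < 1) (hζ : 0 < ζ)
    (B G X : Ω → ℝ) (hBm : Measurable B) (hGm : Measurable G) (hXm : Measurable X)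
    (hB : Measure.map B ℙ = betaMeasureOnUnit (1 - α) α)
    (hG : Measure.map G ℙ = expMeasure 1)
    (hXpos : ∀ᵐ a ∂ℙ, 0 < X a)
    (hXlap : ∀ ω : ℝ, 0 ≤ ω →
      ∫ a, Real.exp (-ω * X a) ∂ℙ = Real.exp (-ζ * ((1 + ω) ^ α - 1)))
    (hind : iIndepFun (m := fun _ => (inferInstance : MeasurableSpace ℝ)) ![B, G, X] ℙ) :
    Measure.map (fun a => B a * (G a / (G a + X a))) ℙ
      = ((betaMeasureOnUnit (1 - α) α).prod (expMeasure 1)).map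
          (fun p => p.1 * (1 - ζ ^ (1 / α) / (ζ + p.2) ^ (1 / α))) := by
  classical
  have hexpP : IsProbabilityMeasure (expMeasure 1) :=
    ProbabilityTheory.isProbabilityMeasure_expMeasure one_pos
  set U : Ω → ℝ := fun a => G a / (G a + X a) with hU_def
  set g : ℝ → ℝ := fun x => 1 - ζ ^ (1 / α) / (ζ + x) ^ (1 / α) with hg_def
  have hUm : Measurable U := hGm.div (hGm.add hXm)
  have hgm : Measurable g := by
    apply measurable_const.sub
    have hcont : Continuous (fun x : ℝ => x ^ (1/α)) :=
      Real.continuous_rpow_const (by positivity)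
    exact measurable_const.div (hcont.measurable.comp (measurable_id.const_add ζ))
  have hα1' : (0:ℝ) < 1 / α := by positivity
  -- a.e. positivity of G
  have hGpos : ∀ᵐ a ∂ℙ, 0 < G a := by
    have h := Stmt9Aux.expMeasure_ae_pos
    rw [← hG] at h
    exact (ae_map_iff hGm.aemeasurable measurableSet_Ioi).mp h
  -- the key law identity
  have hUlaw : Measure.map U ℙ = Measure.map g (expMeasure 1) := by
    have hUprob : IsProbabilityMeasure (Measure.map U ℙ) :=
      Measure.isProbabilityMeasure_map hUm.aemeasurable
    have hgprob : IsProbabilityMeasure (Measure.map g (expMeasure 1)) :=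
      Measure.isProbabilityMeasure_map hgm.aemeasurable
    have hsurv : ∀ u : ℝ,
        Measure.map U ℙ (Set.Ioi u) = Measure.map g (expMeasure 1) (Set.Ioi u) := by
      intro u
      rw [Measure.map_apply hUm measurableSet_Ioi,
        Measure.map_apply hgm measurableSet_Ioi]
      rcases lt_or_ge u 0 with hu | hu0
      · -- u < 0 : both sides are 1
        have hL : U ⁻¹' Set.Ioi u =ᵐ[ℙ] (Set.univ : Set Ω) := by
          rw [Filter.eventuallyEq_univ]
          filter_upwards [hGpos, hXpos] with a hGa hXa
          have : 0 < U a := div_pos hGa (by linarith)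
          simp only [Set.mem_preimage, Set.mem_Ioi]
          linarith
        have hR : g ⁻¹' Set.Ioi u =ᵐ[expMeasure 1] (Set.univ : Set ℝ) := by
          rw [Filter.eventuallyEq_univ]
          filter_upwards [Stmt9Aux.expMeasure_ae_pos] with x hx
          have h1 : ζ ^ (1/α) ≤ (ζ + x) ^ (1/α) :=
            Real.rpow_le_rpow hζ.le (by linarith) hα1'.le
          have h2 : (0:ℝ) < (ζ + x) ^ (1/α) := Real.rpow_pos_of_pos (by linarith) _
          have : ζ ^ (1/α) / (ζ + x) ^ (1/α) ≤ 1 := by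
            rw [div_le_one h2]; exact h1
          simp only [Set.mem_preimage, Set.mem_Ioi, hg_def]
          linarith
        rw [measure_congr hL, measure_congr hR, measure_univ, measure_univ]
      rcases le_or_gt 1 u with hu1 | hu1
      · -- u ≥ 1 : both sides are 0
        have hL : U ⁻¹' Set.Ioi u =ᵐ[ℙ] (∅ : Set Ω) := by
          rw [Filter.eventuallyEq_empty]
          filter_upwards [hGpos, hXpos] with a hGa hXa
          have h1 : U a < 1 := by
            rw [hU_def, div_lt_one (by linarith)]; linarith
          simp only [Set.mem_preimage, Set.mem_Ioi]
          intro h; exact absurd h (by push_neg; linarith)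
        have hR : g ⁻¹' Set.Ioi u =ᵐ[expMeasure 1] (∅ : Set ℝ) := by
          rw [Filter.eventuallyEq_empty]
          filter_upwards [Stmt9Aux.expMeasure_ae_pos] with x hx
          have h2 : (0:ℝ) < (ζ + x) ^ (1/α) := Real.rpow_pos_of_pos (by linarith) _
          have h1 : 0 < ζ ^ (1/α) / (ζ + x) ^ (1/α) :=
            div_pos (Real.rpow_pos_of_pos hζ _) h2
          simp only [Set.mem_preimage, Set.mem_Ioi, hg_def]
          intro h; nlinarith
        rw [measure_congr hL, measure_congr hR, measure_empty, measure_empty]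
      · -- 0 ≤ u < 1
        have h1u : (0:ℝ) < 1 - u := by linarith
        set c : ℝ := u / (1 - u) with hc_def
        have hc0 : 0 ≤ c := div_nonneg hu0 h1u.le
        -- LHS
        have hGX : IndepFun G X ℙ := by
          have h := hind.indepFun (show (1 : Fin 3) ≠ 2 by decide)
          simpa using h
        have hjoint : Measure.map (fun a => (X a, G a)) ℙ
            = (Measure.map X ℙ).prod (expMeasure 1) := by
          rw [← hG]
          exact (indepFun_iff_map_prod_eq_prod_map_map hXm.aemeasurable
            hGm.aemeasurable).mp hGX.symm
        have hSm : MeasurableSet {p : ℝ × ℝ | c * p.1 < p.2} :=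
          measurableSet_lt (measurable_fst.const_mul c) measurable_snd
        have hLset : U ⁻¹' Set.Ioi u =ᵐ[ℙ] {a | c * X a < G a} := by
          rw [Filter.eventuallyEq_set]
          filter_upwards [hGpos, hXpos] with a hGa hXa
          simp only [Set.mem_preimage, Set.mem_Ioi, Set.mem_setOf_eq, hU_def]
          rw [lt_div_iff₀ (by linarith)]
          constructor
          · intro h
            rw [hc_def, div_mul_eq_mul_div, div_lt_iff₀ h1u]
            nlinarith
          · intro h
            rw [hc_def, div_mul_eq_mul_div, div_lt_iff₀ h1u] at h
            nlinarith
        have hXlawpos : ∀ᵐ x ∂(Measure.map X ℙ), 0 < x :=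
          (ae_map_iff hXm.aemeasurable measurableSet_Ioi).mpr hXpos
        have hLHS : ℙ (U ⁻¹' Set.Ioi u)
            = ENNReal.ofReal (Real.exp (-ζ * ((1 + c) ^ α - 1))) := by
          rw [measure_congr hLset]
          have h1 : {a | c * X a < G a}
              = (fun a => (X a, G a)) ⁻¹' {p : ℝ × ℝ | c * p.1 < p.2} := rfl
          rw [h1, ← Measure.map_apply (hXm.prodMk hGm) hSm, hjoint,
            Measure.prod_apply hSm]
          have h2 : ∫⁻ x, expMeasure 1 (Prod.mk x ⁻¹' {p : ℝ × ℝ | c * p.1 < p.2})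
                ∂(Measure.map X ℙ)
              = ∫⁻ x, ENNReal.ofReal (Real.exp (-c * x)) ∂(Measure.map X ℙ) := by
            apply lintegral_congr_ae
            filter_upwards [hXlawpos] with x hx
            have h3 : Prod.mk x ⁻¹' {p : ℝ × ℝ | c * p.1 < p.2} = Set.Ioi (c * x) := rfl
            rw [h3, Stmt9Aux.expMeasure_Ioi (by positivity), neg_mul]
          have hfm : Measurable (fun x : ℝ => ENNReal.ofReal (Real.exp (-c * x))) :=
            (Real.measurable_exp.comp (measurable_id.const_mul (-c))).ennreal_ofReal
          rw [h2, lintegral_map hfm hXm]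
          have hint : Integrable (fun a => Real.exp (-c * X a)) ℙ := by
            apply (integrable_const (1:ℝ)).mono'
              ((Real.measurable_exp.comp (hXm.const_mul (-c))).aestronglyMeasurable)
            filter_upwards [hXpos] with a hXa
            simp only [Real.norm_eq_abs, Function.comp_apply, Real.abs_exp]
            apply Real.exp_le_one_iff.mpr
            nlinarith
          beta_reduce
          rw [← MeasureTheory.ofReal_integral_eq_lintegral_ofReal hint
            (Filter.Eventually.of_forall fun a => (Real.exp_pos _).le)]
          rw [hXlap c hc0]
        have hmeasmap : ∀ x:ℝ, ENNReal.ofReal (Real.exp (-c * x)) = ENNReal.ofReal (Real.exp (-c * x)) := fun _ => rfl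
        -- RHS
        have ht0 : (1 - u) ^ α ≤ 1 := Real.rpow_le_one h1u.le (by linarith) hα0.le
        have htα : (0:ℝ) < (1 - u) ^ α := Real.rpow_pos_of_pos h1u _
        set t : ℝ := ζ / (1 - u) ^ α - ζ with ht_def
        have ht : 0 ≤ t := by
          rw [ht_def, sub_nonneg, le_div_iff₀ htα]
          nlinarith
        have hRset : g ⁻¹' Set.Ioi u =ᵐ[expMeasure 1] Set.Ioi t := by
          rw [Filter.eventuallyEq_set]
          filter_upwards [Stmt9Aux.expMeasure_ae_pos] with x hx
          simp only [Set.mem_preimage, Set.mem_Ioi, hg_def]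
          have hζx : (0:ℝ) < ζ + x := by linarith
          have h2 : (0:ℝ) < (ζ + x) ^ (1/α) := Real.rpow_pos_of_pos hζx _
          have key : ζ ^ (1/α) / (1 - u) = (ζ / (1 - u) ^ α) ^ (1/α) := by
            rw [Real.div_rpow hζ.le htα.le, ← Real.rpow_mul h1u.le,
              mul_one_div_cancel hα0.ne', Real.rpow_one]
          constructor
          · intro h
            have h4 : ζ ^ (1/α) / (ζ + x) ^ (1/α) < 1 - u := by linarith
            rw [div_lt_iff₀ h2] at h4
            have h5 : ζ ^ (1/α) / (1 - u) < (ζ + x) ^ (1/α) := by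
              rw [div_lt_iff₀ h1u]; linarith [mul_comm (1-u) ((ζ+x)^(1/α))]
            rw [key] at h5
            have h6 : ζ / (1 - u) ^ α < ζ + x := by
              have := (Real.rpow_lt_rpow_iff (by positivity) hζx.le hα1').mp h5
              exact this
            rw [ht_def]; linarith
          · intro h
            have h6 : ζ / (1 - u) ^ α < ζ + x := by rw [ht_def] at h; linarith
            have h5 : (ζ / (1 - u) ^ α) ^ (1/α) < (ζ + x) ^ (1/α) :=
              Real.rpow_lt_rpow (by positivity) h6 hα1'
            rw [← key, div_lt_iff₀ h1u] at h5
            have h4 : ζ ^ (1/α) / (ζ + x) ^ (1/α) < 1 - u := by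
              rw [div_lt_iff₀ h2]; linarith [mul_comm ((ζ+x)^(1/α)) (1-u)]
            linarith
        have hRHS : expMeasure 1 (g ⁻¹' Set.Ioi u)
            = ENNReal.ofReal (Real.exp (-t)) := by
          rw [measure_congr hRset, Stmt9Aux.expMeasure_Ioi ht]
        rw [hLHS, hRHS]
        congr 1
        have h1c : 1 + c = ((1 - u))⁻¹ := by
          rw [hc_def]; field_simp; ring
        rw [h1c, Real.inv_rpow h1u.le, ht_def]
        congr 1
        field_simp
    refine MeasureTheory.Measure.ext_of_Iic (Measure.map U ℙ) (Measure.map g (expMeasure 1))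
      (fun u => ?_)
    have h1 := measure_compl (μ := Measure.map U ℙ) measurableSet_Ioi
      (measure_ne_top _ (Set.Ioi u))
    have h2 := measure_compl (μ := Measure.map g (expMeasure 1)) measurableSet_Ioi
      (measure_ne_top _ (Set.Ioi u))
    rw [Set.compl_Ioi] at h1 h2
    rw [h1, h2, measure_univ, measure_univ, hsurv u]
  -- independence of B and U
  have hvm : ∀ i, Measurable (![B, G, X] i) := by
    intro i; fin_cases i
    · exact hBm
    · exact hGm
    · exact hXm
  have hBU : IndepFun B U ℙ := by
    have h := hind.indepFun_prodMk hvm 1 2 0 (by decide) (by decide)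
    simp only [Matrix.cons_val_one, Matrix.head_cons, Matrix.cons_val_zero,
      Matrix.cons_val_two, Matrix.tail_cons] at h
    have h2 := h.comp (φ := fun p : ℝ × ℝ => p.1 / (p.1 + p.2)) (ψ := id)
      (measurable_fst.div (measurable_fst.add measurable_snd)) measurable_id
    exact h2.symm
  -- assemble
  have hSbeta : SFinite (betaMeasureOnUnit (1 - α) α) := by
    unfold betaMeasureOnUnit; infer_instance
  have hmul : Measurable (fun p : ℝ × ℝ => p.1 * p.2) := measurable_fst.mul measurable_snd
  calc Measure.map (fun a => B a * U a) ℙ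
      = Measure.map ((fun p : ℝ × ℝ => p.1 * p.2) ∘ (fun a => (B a, U a))) ℙ := rfl
    _ = Measure.map (fun p : ℝ × ℝ => p.1 * p.2)
          (Measure.map (fun a => (B a, U a)) ℙ) :=
        (Measure.map_map hmul (hBm.prodMk hUm)).symm
    _ = Measure.map (fun p : ℝ × ℝ => p.1 * p.2)
          ((betaMeasureOnUnit (1 - α) α).prod (Measure.map g (expMeasure 1))) := by
        rw [(indepFun_iff_map_prod_eq_prod_map_map hBm.aemeasurable
          hUm.aemeasurable).mp hBU, hB, hUlaw]
    _ = ((betaMeasureOnUnit (1 - α) α).prod (expMeasure 1)).map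
          (fun p => p.1 * (1 - ζ ^ (1 / α) / (ζ + p.2) ^ (1 / α))) := by
        have hpp : (betaMeasureOnUnit (1 - α) α).prod (Measure.map g (expMeasure 1))
            = Measure.map (Prod.map id g) ((betaMeasureOnUnit (1 - α) α).prod (expMeasure 1)) := by
          conv_lhs => rw [← Measure.map_id (μ := betaMeasureOnUnit (1 - α) α)]
          exact Measure.map_prod_map _ _ measurable_id hgm
        rw [hpp, Measure.map_map hmul (measurable_id.prodMap hgm)]
        rfl
end

section
/- Let 0 < α < 1, 0 < δ < 1, ζ > 0, y ∈ [0,1], and let τ_δ, τ_α be independent generalized gamma subordinators with exponents ψ_δ, ψ_α. Then −log E[exp(−ω_1 τ_α(τ_δ(ζ)) − ω_2 τ_α(τ_δ(ζ) y))] = ζ [ ( y(1+ω_1+ω_2)^α + (1−y)(1+ω_1)^α )^δ − 1 ] for all ω_1, ω_2 ≥ 0. -/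
open MeasureTheory ProbabilityTheory

lemma exp_neg_lip {x z : ℝ} (hx : 0 ≤ x) (hz : 0 ≤ z) :
    |Real.exp (-x) - Real.exp (-z)| ≤ |x - z| := by
  wlog h : z ≤ x generalizing x z
  · rw [abs_sub_comm, abs_sub_comm x z]; exact this hz hx (le_of_not_ge h)
  have h1 : Real.exp (-x) ≤ Real.exp (-z) := Real.exp_le_exp.mpr (by linarith)
  rw [abs_of_nonpos (by linarith), abs_of_nonneg (by linarith)]
  have h2 : Real.exp (-x) = Real.exp (-z) * Real.exp (-(x - z)) := by
    rw [← Real.exp_add]; congr 1; ring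
  have h3 : 1 - (x - z) ≤ Real.exp (-(x-z)) := by
    have := Real.add_one_le_exp (-(x-z)); linarith
  have h4 : Real.exp (-z) ≤ 1 := Real.exp_le_one_iff.mpr (by linarith)
  have h5 : 0 < Real.exp (-z) := Real.exp_pos _
  nlinarith [Real.exp_pos (-(x-z))]


section Aux
variable {Ω : Type*} [MeasureSpace Ω] [IsProbabilityMeasure (ℙ : Measure Ω)]

/-- Fixed-time joint Laplace transform. -/
lemma lemA (α : ℝ) (τ : Ω → ℝ → ℝ) (hτ : IsGGSubordinator ℙ τ α)
    (y ω₁ ω₂ : ℝ) (hy0 : 0 ≤ y) (hy1 : y ≤ 1) (hω₁ : 0 ≤ ω₁) (hω₂ : 0 ≤ ω₂)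
    (s : ℝ) (hs : 0 ≤ s) :
    ∫ a, Real.exp (-ω₁ * τ a s - ω₂ * τ a (s * y)) ∂ℙ
      = Real.exp (-s * (y * ((1+ω₁+ω₂)^α - 1) + (1-y) * ((1+ω₁)^α - 1))) := by
  obtain ⟨hm, h0, hmono, hidp, hlap⟩ := hτ
  have hsy0 : 0 ≤ s * y := mul_nonneg hs hy0
  have hsys : s * y ≤ s := by nlinarith
  have h1 : (fun a => Real.exp (-ω₁ * τ a s - ω₂ * τ a (s*y)))
      = (fun a => Real.exp (-(ω₁+ω₂) * τ a (s*y))) * (fun a => Real.exp (-ω₁ * (τ a s - τ a (s*y)))) := by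
    funext a
    simp only [Pi.mul_apply, ← Real.exp_add]
    congr 1; ring
  have hmeas1 : Measurable (fun a => Real.exp (-(ω₁+ω₂) * τ a (s*y))) := by
    have := (measurable_pi_apply (s*y)).comp hm
    fun_prop
  have hmeas2 : Measurable (fun a => Real.exp (-ω₁ * (τ a s - τ a (s*y)))) := by
    have h2 := (measurable_pi_apply s).comp hm
    have h3 := (measurable_pi_apply (s*y)).comp hm
    fun_prop
  have hind2 : IndepFun (fun a => Real.exp (-(ω₁+ω₂) * τ a (s*y)))
      (fun a => Real.exp (-ω₁ * (τ a s - τ a (s*y)))) ℙ := by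
    refine (hidp (s*y) s hsy0 hsys).comp (φ := fun x => Real.exp (-(ω₁+ω₂) * x))
      (ψ := fun x => Real.exp (-ω₁ * x)) (by fun_prop) (by fun_prop)
  rw [h1, hind2.integral_mul_eq_mul_integral hmeas1.aestronglyMeasurable hmeas2.aestronglyMeasurable]
  have e1 : ∫ a, Real.exp (-(ω₁+ω₂) * τ a (s*y)) ∂ℙ
      = Real.exp (-(s*y) * ((1+(ω₁+ω₂))^α - 1)) := by
    have := hlap 0 (s*y) (ω₁+ω₂) le_rfl hsy0 (add_nonneg hω₁ hω₂)
    simp only [h0, sub_zero] at this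
    rw [this]
  have e2 := hlap (s*y) s ω₁ hsy0 hsys hω₁
  rw [e1, e2, ← Real.exp_add]
  congr 1
  ring

/-- Fubini for a functional of the process at countably many (discretized) times. -/
lemma lemC (τ : Ω → ℝ → ℝ) (hm : Measurable (fun a => τ a))
    (N : Ω → ℤ) (hN : Measurable N) (hiN : IndepFun (fun a => τ a) N ℙ)
    (F : (ℝ → ℝ) → ℤ → ℝ) (hF : Measurable (fun p : (ℝ → ℝ) × ℤ => F p.1 p.2))
    (hb : ∀ a k, |F (τ a) k| ≤ 1)
    (g : ℤ → ℝ) (hg : ∀ k, ∫ a, F (τ a) k ∂ℙ = g k) :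
    ∫ a, F (τ a) (N a) ∂ℙ = ∫ a, g (N a) ∂ℙ := by
  set μ : Measure (ℝ → ℝ) := Measure.map (fun a => τ a) ℙ with hμ
  set ν : Measure ℤ := Measure.map N ℙ with hν
  haveI : IsProbabilityMeasure μ := Measure.isProbabilityMeasure_map hm.aemeasurable
  haveI : IsProbabilityMeasure ν := Measure.isProbabilityMeasure_map hN.aemeasurable
  have hmap : Measure.map (fun a => (τ a, N a)) ℙ = μ.prod ν :=
    (indepFun_iff_map_prod_eq_prod_map_map hm.aemeasurable hN.aemeasurable).mp hiN
  -- good set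
  set G : Set (ℝ → ℝ) := {f | ∀ k : ℤ, |F f k| ≤ 1} with hG
  have hGmeas : MeasurableSet G := by
    have : G = ⋂ k : ℤ, {f | |F f k| ≤ 1} := by ext f; simp [hG]
    rw [this]
    refine MeasurableSet.iInter fun k => ?_
    have hFk : Measurable fun f => F f k := hF.comp (measurable_id.prodMk measurable_const)
    exact measurableSet_le hFk.abs measurable_const
  have hGfull : μ Gᶜ = 0 := by
    rw [hμ, Measure.map_apply hm hGmeas.compl]
    have : (fun a => τ a) ⁻¹' Gᶜ = ∅ := by
      ext a; simp [hG, hb a]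
    simp [this]
  have hbae : ∀ᵐ p ∂(μ.prod ν), ‖F p.1 p.2‖ ≤ 1 := by
    rw [ae_iff]
    have hsub : {p : (ℝ → ℝ) × ℤ | ¬ ‖F p.1 p.2‖ ≤ 1} ⊆ Gᶜ ×ˢ (Set.univ : Set ℤ) := by
      intro p hp
      simp only [Set.mem_setOf_eq, not_le, Real.norm_eq_abs] at hp
      exact ⟨fun hpg => absurd (hpg p.2) (not_le.mpr hp), trivial⟩
    exact measure_mono_null hsub (by rw [Measure.prod_prod, hGfull, zero_mul])
  have hInt : Integrable (fun p : (ℝ → ℝ) × ℤ => F p.1 p.2) (μ.prod ν) :=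
    (integrable_const (1:ℝ)).mono' hF.aestronglyMeasurable hbae
  have hpair : AEMeasurable (fun a => (τ a, N a)) ℙ := (hm.prodMk hN).aemeasurable
  have step1 : ∫ a, F (τ a) (N a) ∂ℙ = ∫ p : (ℝ → ℝ) × ℤ, F p.1 p.2 ∂(μ.prod ν) := by
    rw [← hmap, integral_map hpair]
    rw [hmap]
    exact hF.aestronglyMeasurable
  have step2 : ∫ p : (ℝ → ℝ) × ℤ, F p.1 p.2 ∂(μ.prod ν) = ∫ k, ∫ f, F f k ∂μ ∂ν :=
    integral_prod_symm _ hInt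
  have hinner : ∀ k, ∫ f, F f k ∂μ = g k := by
    intro k
    have hFk : Measurable (fun f : ℝ → ℝ => F f k) :=
      hF.comp (measurable_id.prodMk measurable_const)
    rw [hμ, integral_map hm.aemeasurable hFk.aestronglyMeasurable, hg k]
  rw [step1, step2]
  calc ∫ k, ∫ f, F f k ∂μ ∂ν = ∫ k, g k ∂ν := by simp_rw [hinner]
    _ = ∫ a, g (N a) ∂ℙ := by
        rw [hν, integral_map hN.aemeasurable
          (Measurable.of_discrete (f := g)).aestronglyMeasurable]

end Aux

set_option maxHeartbeats 2000000

/-- Joint Laplace transform of `(τ_α(τ_δ(ζ)), τ_α(τ_δ(ζ)y))`: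
with `S = τ_δ(ζ)` having Laplace transform `e^{-ζ((1+u)^δ-1)}`, independent of the
generalized gamma subordinator `τ_α`,
`-log E[exp(-ω₁ τ_α(S) - ω₂ τ_α(Sy))] = ζ[(y(1+ω₁+ω₂)^α + (1-y)(1+ω₁)^α)^δ - 1]`. -/
theorem stmt11 {Ω : Type*} [MeasureSpace Ω] [IsProbabilityMeasure (ℙ : Measure Ω)]
    (α δ ζ y : ℝ) (hα0 : 0 < α) (hα1 : α < 1) (hδ0 : 0 < δ) (hδ1 : δ < 1)
    (hζ : 0 < ζ) (hy : y ∈ Set.Icc (0 : ℝ) 1)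
    (τ : Ω → ℝ → ℝ) (hτ : IsGGSubordinator ℙ τ α)
    (S : Ω → ℝ) (hSm : Measurable S) (hSnn : ∀ᵐ a ∂ℙ, 0 ≤ S a)
    (hSlap : ∀ u : ℝ, 0 ≤ u →
      ∫ a, Real.exp (-u * S a) ∂ℙ = Real.exp (-ζ * ((1 + u) ^ δ - 1)))
    (hind : IndepFun (fun a => τ a) S ℙ)
    (ω₁ ω₂ : ℝ) (hω₁ : 0 ≤ ω₁) (hω₂ : 0 ≤ ω₂) :
    -Real.log (∫ a, Real.exp (-ω₁ * τ a (S a) - ω₂ * τ a (S a * y)) ∂ℙ)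
      = ζ * ((y * (1 + ω₁ + ω₂) ^ α + (1 - y) * (1 + ω₁) ^ α) ^ δ - 1) := by
  obtain ⟨hy0, hy1⟩ := hy
  obtain ⟨hm, h0, hmono, hidp, hlap⟩ := id hτ
  have hτt : ∀ t : ℝ, Measurable fun a => τ a t := fun t => (measurable_pi_apply t).comp hm
  have hτnn : ∀ (a) (t : ℝ), 0 ≤ t → 0 ≤ τ a t := fun a t ht => (h0 a) ▸ hmono a ht
  set c : ℝ := y * ((1+ω₁+ω₂)^α - 1) + (1-y) * ((1+ω₁)^α - 1) with hcdef
  have hc : 0 ≤ c := by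
    have h1 : (1:ℝ) ≤ (1+ω₁+ω₂)^α := Real.one_le_rpow (by linarith) hα0.le
    have h2 : (1:ℝ) ≤ (1+ω₁)^α := Real.one_le_rpow (by linarith) hα0.le
    have h3 : (0:ℝ) ≤ 1 - y := by linarith
    nlinarith
  -- the discretization
  set sp : Ω → ℝ := fun a => max (S a) 0 with hspdef
  have hspm : Measurable sp := hSm.max measurable_const
  have hsp0 : ∀ a, 0 ≤ sp a := fun a => le_max_right _ _
  set r : ℕ → ℤ → ℝ := fun n k => (max (k:ℝ) 0) / 2^n with hrdef
  have hr0 : ∀ n k, 0 ≤ r n k := fun n k => by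
    have : (0:ℝ) ≤ max (k:ℝ) 0 := le_max_right _ _
    positivity
  set NC : ℕ → Ω → ℤ := fun n a => ⌈(2:ℝ)^n * sp a⌉ with hNCdef
  set NF : ℕ → Ω → ℤ := fun n a => ⌊(2:ℝ)^n * sp a⌋ with hNFdef
  have hNCm : ∀ n, Measurable (NC n) := fun n => (measurable_const.mul hspm).ceil
  have hNFm : ∀ n, Measurable (NF n) := fun n => (measurable_const.mul hspm).floor
  have hNC0 : ∀ n a, (0:ℝ) ≤ ((NC n a : ℝ)) := fun n a => by
    have h1 : (0:ℤ) ≤ NC n a := Int.ceil_nonneg (by positivity)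
    exact_mod_cast h1
  have hNF0 : ∀ n a, (0:ℝ) ≤ ((NF n a : ℝ)) := fun n a => by
    have h1 : (0:ℤ) ≤ NF n a := Int.floor_nonneg.mpr (by positivity)
    exact_mod_cast h1
  have hrNC : ∀ n a, r n (NC n a) = (NC n a : ℝ) / 2^n := fun n a => by
    simp only [hrdef]; rw [max_eq_left (hNC0 n a)]
  have hrNF : ∀ n a, r n (NF n a) = (NF n a : ℝ) / 2^n := fun n a => by
    simp only [hrdef]; rw [max_eq_left (hNF0 n a)]
  have hSCge : ∀ n a, sp a ≤ r n (NC n a) := fun n a => by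
    rw [hrNC, le_div_iff₀ (by positivity : (0:ℝ) < 2^n)]
    calc sp a * 2^n = 2^n * sp a := by ring
      _ ≤ (NC n a : ℝ) := Int.le_ceil _
  have hSCle : ∀ n a, r n (NC n a) ≤ sp a + ((2:ℝ)^n)⁻¹ := fun n a => by
    rw [hrNC, div_le_iff₀ (by positivity : (0:ℝ) < 2^n)]
    have h1 : (NC n a : ℝ) < 2^n * sp a + 1 := Int.ceil_lt_add_one _
    have h2 : (0:ℝ) < 2^n := by positivity
    calc (NC n a : ℝ) ≤ 2^n * sp a + 1 := h1.le
      _ = (sp a + ((2:ℝ)^n)⁻¹) * 2^n := by field_simp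
  have hSFle : ∀ n a, r n (NF n a) ≤ sp a := fun n a => by
    rw [hrNF, div_le_iff₀ (by positivity : (0:ℝ) < 2^n)]
    calc (NF n a : ℝ) ≤ 2^n * sp a := Int.floor_le _
      _ = sp a * 2^n := by ring
  have hSFge : ∀ n a, sp a - ((2:ℝ)^n)⁻¹ ≤ r n (NF n a) := fun n a => by
    rw [hrNF, le_div_iff₀ (by positivity : (0:ℝ) < 2^n)]
    have h1 : 2^n * sp a - 1 < (NF n a : ℝ) := Int.sub_one_lt_floor _
    have h2 : (0:ℝ) < 2^n := by positivity
    calc (sp a - ((2:ℝ)^n)⁻¹) * 2^n = 2^n * sp a - 1 := by field_simp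
      _ ≤ (NF n a : ℝ) := h1.le
  -- the functionals
  set Fn : ℕ → (ℝ → ℝ) → ℤ → ℝ :=
    fun n f k => Real.exp (-ω₁ * f (r n k) - ω₂ * f (r n k * y)) with hFndef
  have hFnm : ∀ n, Measurable (fun p : (ℝ → ℝ) × ℤ => Fn n p.1 p.2) := by
    intro n
    refine measurable_from_prod_countable_left fun k => ?_
    have h1 : Measurable fun f : ℝ → ℝ => f (r n k) := measurable_pi_apply _
    have h2 : Measurable fun f : ℝ → ℝ => f (r n k * y) := measurable_pi_apply _
    exact Real.measurable_exp.comp ((h1.const_mul (-ω₁)).sub (h2.const_mul ω₂))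
  -- pointwise bounds and comparisons
  have hXle : ∀ (a) (t u : ℝ), 0 ≤ t → t ≤ u →
      Real.exp (-ω₁ * τ a u - ω₂ * τ a (u*y)) ≤ Real.exp (-ω₁ * τ a t - ω₂ * τ a (t*y)) := by
    intro a t u ht htu
    apply Real.exp_le_exp.mpr
    have h1 : τ a t ≤ τ a u := hmono a htu
    have h2 : τ a (t*y) ≤ τ a (u*y) := hmono a (by nlinarith)
    nlinarith
  have hX01 : ∀ (a) (t : ℝ), 0 ≤ t →
      Real.exp (-ω₁ * τ a t - ω₂ * τ a (t*y)) ≤ 1 := by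
    intro a t ht
    apply Real.exp_le_one_iff.mpr
    have h1 := hτnn a t ht
    have h2 := hτnn a (t*y) (by positivity)
    nlinarith
  -- independence with discretized times
  have hiNC : ∀ n, IndepFun (fun a => τ a) (NC n) ℙ := fun n => by
    have hφ : Measurable fun x : ℝ => ⌈(2:ℝ)^n * max x 0⌉ :=
      (measurable_const.mul (measurable_id.max measurable_const)).ceil
    exact hind.comp measurable_id hφ
  have hiNF : ∀ n, IndepFun (fun a => τ a) (NF n) ℙ := fun n => by
    have hφ : Measurable fun x : ℝ => ⌊(2:ℝ)^n * max x 0⌋ :=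
      (measurable_const.mul (measurable_id.max measurable_const)).floor
    exact hind.comp measurable_id hφ
  have hb : ∀ n (a : Ω) (k : ℤ), |Fn n (τ a) k| ≤ 1 := by
    intro n a k
    simp only [hFndef]
    rw [abs_of_nonneg (Real.exp_pos _).le]
    exact hX01 a (r n k) (hr0 n k)
  -- the two discretized integral identities
  have hlemA : ∀ (s : ℝ), 0 ≤ s →
      ∫ a, Real.exp (-ω₁ * τ a s - ω₂ * τ a (s * y)) ∂ℙ = Real.exp (-s * c) := by
    intro s hs
    rw [lemA α τ hτ y ω₁ ω₂ hy0 hy1 hω₁ hω₂ s hs]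
  have hIC : ∀ n, ∫ a, Fn n (τ a) (NC n a) ∂ℙ
      = ∫ a, Real.exp (-(r n (NC n a)) * c) ∂ℙ := fun n => by
    refine lemC τ hm (NC n) (hNCm n) (hiNC n) (Fn n) (hFnm n) (hb n)
      (fun k => Real.exp (-(r n k) * c)) (fun k => ?_)
    simp only [hFndef]
    exact hlemA (r n k) (hr0 n k)
  have hIF : ∀ n, ∫ a, Fn n (τ a) (NF n a) ∂ℙ
      = ∫ a, Real.exp (-(r n (NF n a)) * c) ∂ℙ := fun n => by
    refine lemC τ hm (NF n) (hNFm n) (hiNF n) (Fn n) (hFnm n) (hb n)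
      (fun k => Real.exp (-(r n k) * c)) (fun k => ?_)
    simp only [hFndef]
    exact hlemA (r n k) (hr0 n k)
  -- integrability helper
  have hIntgen : ∀ f : Ω → ℝ, Measurable f → (∀ᵐ a ∂ℙ, |f a| ≤ 1) → Integrable f ℙ :=
    fun f hf hbd => (integrable_const (1:ℝ)).mono' hf.aestronglyMeasurable
      (by simpa [Real.norm_eq_abs] using hbd)
  -- processes at discretized times
  set XC : ℕ → Ω → ℝ := fun n a => Fn n (τ a) (NC n a) with hXCdef
  set XF : ℕ → Ω → ℝ := fun n a => Fn n (τ a) (NF n a) with hXFdef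
  set Xp : Ω → ℝ := fun a => Real.exp (-ω₁ * τ a (sp a) - ω₂ * τ a (sp a * y)) with hXpdef
  have hXCm : ∀ n, Measurable (XC n) := fun n => by
    have t2 : Measurable ((fun p : (ℝ → ℝ) × ℤ => Fn n p.1 p.2) ∘ (fun a : Ω => (τ a, NC n a))) :=
      (hFnm n).comp (hm.prodMk (hNCm n))
    exact t2
  have hXFm : ∀ n, Measurable (XF n) := fun n => by
    have t2 : Measurable ((fun p : (ℝ → ℝ) × ℤ => Fn n p.1 p.2) ∘ (fun a : Ω => (τ a, NF n a))) :=
      (hFnm n).comp (hm.prodMk (hNFm n))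
    exact t2
  have hXC0 : ∀ n a, 0 ≤ XC n a := fun n a => (Real.exp_pos _).le
  have hXF0 : ∀ n a, 0 ≤ XF n a := fun n a => (Real.exp_pos _).le
  have hXC1 : ∀ n a, XC n a ≤ 1 := fun n a => hX01 a _ (hr0 _ _)
  have hXF1 : ∀ n a, XF n a ≤ 1 := fun n a => hX01 a _ (hr0 _ _)
  have hXCXp : ∀ n a, XC n a ≤ Xp a := fun n a =>
    hXle a (sp a) (r n (NC n a)) (hsp0 a) (hSCge n a)
  have hXpXF : ∀ n a, Xp a ≤ XF n a := fun n a =>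
    hXle a (r n (NF n a)) (sp a) (hr0 _ _) (hSFle n a)
  set U : Ω → ℝ := fun a => ⨆ n, XC n a with hUdef
  set V : Ω → ℝ := fun a => ⨅ n, XF n a with hVdef
  have hbddA : ∀ a, BddAbove (Set.range fun n => XC n a) := fun a =>
    ⟨1, by rintro x ⟨n, rfl⟩; exact hXC1 n a⟩
  have hbddB : ∀ a, BddBelow (Set.range fun n => XF n a) := fun a =>
    ⟨0, by rintro x ⟨n, rfl⟩; exact hXF0 n a⟩
  have hXCleU : ∀ n a, XC n a ≤ U a := fun n a => le_ciSup (hbddA a) n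
  have hUleXp : ∀ a, U a ≤ Xp a := fun a => ciSup_le fun n => hXCXp n a
  have hXpleV : ∀ a, Xp a ≤ V a := fun a => le_ciInf fun m => hXpXF m a
  have hVleXF : ∀ m a, V a ≤ XF m a := fun m a => ciInf_le (hbddB a) m
  have hU0 : ∀ a, 0 ≤ U a := fun a => le_trans (hXC0 0 a) (hXCleU 0 a)
  have hU1 : ∀ a, U a ≤ 1 := fun a => ciSup_le fun n => hXC1 n a
  have hV0 : ∀ a, 0 ≤ V a := fun a => le_ciInf fun m => hXF0 m a
  have hV1 : ∀ a, V a ≤ 1 := fun a => le_trans (hVleXF 0 a) (hXF1 0 a)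
  have hUm : Measurable U := Measurable.iSup hXCm
  have hVm : Measurable V := Measurable.iInf hXFm
  have hIntU : Integrable U ℙ := hIntgen U hUm (Filter.Eventually.of_forall fun a =>
    abs_le.mpr ⟨by linarith [hU0 a], hU1 a⟩)
  have hIntV : Integrable V ℙ := hIntgen V hVm (Filter.Eventually.of_forall fun a =>
    abs_le.mpr ⟨by linarith [hV0 a], hV1 a⟩)
  have hIntXC : ∀ n, Integrable (XC n) ℙ := fun n => hIntgen _ (hXCm n)
    (Filter.Eventually.of_forall fun a => abs_le.mpr ⟨by linarith [hXC0 n a], hXC1 n a⟩)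
  have hIntXF : ∀ n, Integrable (XF n) ℙ := fun n => hIntgen _ (hXFm n)
    (Filter.Eventually.of_forall fun a => abs_le.mpr ⟨by linarith [hXF0 n a], hXF1 n a⟩)
  set L : ℝ := Real.exp (-ζ * ((1 + c)^δ - 1)) with hLdef
  have hLS : ∫ a, Real.exp (-c * S a) ∂ℙ = L := hSlap c hc
  have hIntS : Integrable (fun a => Real.exp (-c * S a)) ℙ := by
    refine hIntgen _ ((hSm.const_mul (-c)).exp) ?_
    filter_upwards [hSnn] with a hS
    rw [abs_of_nonneg (Real.exp_pos _).le]
    apply Real.exp_le_one_iff.mpr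
    nlinarith
  -- generic closeness of discretized exp(-T*c) integrals to L
  have hnear : ∀ (T : Ω → ℝ) (ε : ℝ), Measurable T → (∀ a, 0 ≤ T a) →
      (∀ a, |T a - sp a| ≤ ε) → 0 ≤ ε →
      |(∫ a, Real.exp (-(T a) * c) ∂ℙ) - L| ≤ c * ε := by
    intro T ε hTm hT0 hTsp hε
    have hIntT : Integrable (fun a => Real.exp (-(T a) * c)) ℙ := by
      refine hIntgen _ ((hTm.neg.mul_const c).exp) ?_
      refine Filter.Eventually.of_forall fun a => ?_
      rw [abs_of_nonneg (Real.exp_pos _).le]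
      apply Real.exp_le_one_iff.mpr
      nlinarith [hT0 a]
    rw [← hLS, ← integral_sub hIntT hIntS]
    have hbd : ∀ᵐ a ∂ℙ, ‖Real.exp (-(T a) * c) - Real.exp (-c * S a)‖ ≤ c * ε := by
      filter_upwards [hSnn] with a hS
      have hsp : sp a = S a := max_eq_left hS
      have h1 : Real.exp (-(T a) * c) = Real.exp (-(T a * c)) := by ring_nf
      have h2 : Real.exp (-c * S a) = Real.exp (-(c * S a)) := by ring_nf
      rw [Real.norm_eq_abs, h1, h2]
      calc |Real.exp (-(T a * c)) - Real.exp (-(c * S a))| ≤ |T a * c - c * S a| :=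
            exp_neg_lip (mul_nonneg (hT0 a) hc) (mul_nonneg hc hS)
        _ = c * |T a - S a| := by
            rw [show T a * c - c * S a = c * (T a - S a) by ring, abs_mul, abs_of_nonneg hc]
        _ ≤ c * ε := by
            have := hTsp a
            rw [hsp] at this
            exact mul_le_mul_of_nonneg_left this hc
    calc |∫ a, (Real.exp (-(T a) * c) - Real.exp (-c * S a)) ∂ℙ|
        = ‖∫ a, (Real.exp (-(T a) * c) - Real.exp (-c * S a)) ∂ℙ‖ := (Real.norm_eq_abs _).symm
      _ ≤ (c * ε) * (ℙ Set.univ).toReal := norm_integral_le_of_norm_le_const hbd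
      _ = c * ε := by simp
  have hrNCmeas : ∀ n, Measurable fun a => r n (NC n a) := fun n => by
    have t2 : Measurable ((r n) ∘ (NC n)) := (Measurable.of_discrete (f := r n)).comp (hNCm n)
    exact t2
  have hrNFmeas : ∀ n, Measurable fun a => r n (NF n a) := fun n => by
    have t2 : Measurable ((r n) ∘ (NF n)) := (Measurable.of_discrete (f := r n)).comp (hNFm n)
    exact t2
  have hICbound : ∀ n, |(∫ a, XC n a ∂ℙ) - L| ≤ c * ((2:ℝ)^n)⁻¹ := fun n => by
    rw [hXCdef, hIC n]
    refine hnear _ _ (hrNCmeas n) (fun a => hr0 _ _) (fun a => ?_) (by positivity)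
    rw [abs_of_nonneg (by linarith [hSCge n a])]
    linarith [hSCle n a]
  have hIFbound : ∀ n, |(∫ a, XF n a ∂ℙ) - L| ≤ c * ((2:ℝ)^n)⁻¹ := fun n => by
    rw [hXFdef, hIF n]
    refine hnear _ _ (hrNFmeas n) (fun a => hr0 _ _) (fun a => ?_) (by positivity)
    rw [abs_of_nonpos (by linarith [hSFle n a])]
    linarith [hSFge n a]
  have htend : Filter.Tendsto (fun n : ℕ => c * ((2:ℝ)^n)⁻¹) Filter.atTop (nhds 0) := by
    have h1 : Filter.Tendsto (fun n : ℕ => ((2:ℝ)^n)⁻¹) Filter.atTop (nhds 0) :=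
      tendsto_inv_atTop_zero.comp (tendsto_pow_atTop_atTop_of_one_lt one_lt_two)
    simpa using h1.const_mul c
  have hsqueeze : ∀ (W : Ω → ℝ), Integrable W ℙ → (∀ n a, XC n a ≤ W a) →
      (∀ n a, W a ≤ XF n a) → ∫ a, W a ∂ℙ = L := by
    intro W hIntW hlo hhi
    have hbnd : ∀ n : ℕ, |(∫ a, W a ∂ℙ) - L| ≤ c * ((2:ℝ)^n)⁻¹ := by
      intro n
      have h1 : ∫ a, XC n a ∂ℙ ≤ ∫ a, W a ∂ℙ := integral_mono (hIntXC n) hIntW (hlo n)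
      have h2 : ∫ a, W a ∂ℙ ≤ ∫ a, XF n a ∂ℙ := integral_mono hIntW (hIntXF n) (hhi n)
      have h3 := abs_le.mp (hICbound n)
      have h4 := abs_le.mp (hIFbound n)
      exact abs_le.mpr ⟨by linarith [h3.1], by linarith [h4.2]⟩
    have h5 : |(∫ a, W a ∂ℙ) - L| ≤ 0 :=
      ge_of_tendsto htend (Filter.Eventually.of_forall hbnd)
    have h6 := abs_nonpos_iff.mp h5
    linarith [sub_eq_zero.mp h6]
  have hUI : ∫ a, U a ∂ℙ = L :=
    hsqueeze U hIntU (fun n a => hXCleU n a)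
      (fun n a => le_trans (hUleXp a) (hXpXF n a))
  have hVI : ∫ a, V a ∂ℙ = L :=
    hsqueeze V hIntV (fun n a => le_trans (hXCXp n a) (hXpleV a))
      (fun n a => hVleXF n a)
  have hUV : U =ᵐ[ℙ] V := by
    have hz : ∫ a, (V a - U a) ∂ℙ = 0 := by
      rw [integral_sub hIntV hIntU, hVI, hUI, sub_self]
    have hnn : 0 ≤ fun a => V a - U a := fun a => by
      simp only [Pi.zero_apply]
      linarith [le_trans (hUleXp a) (hXpleV a)]
    have := (integral_eq_zero_iff_of_nonneg hnn (hIntV.sub hIntU)).mp hz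
    filter_upwards [this] with a ha
    have : V a - U a = 0 := ha
    linarith
  have hXpU : Xp =ᵐ[ℙ] U := by
    filter_upwards [hUV] with a ha
    exact le_antisymm (by rw [ha]; exact (hXpleV a).trans (le_of_eq rfl)) (hUleXp a)
  have hXXp : (fun a => Real.exp (-ω₁ * τ a (S a) - ω₂ * τ a (S a * y))) =ᵐ[ℙ] Xp := by
    filter_upwards [hSnn] with a hS
    have hsp : sp a = S a := max_eq_left hS
    simp only [hXpdef, hsp]
  have hfinal : ∫ a, Real.exp (-ω₁ * τ a (S a) - ω₂ * τ a (S a * y)) ∂ℙ = L := by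
    rw [integral_congr_ae (hXXp.trans hXpU), hUI]
  rw [hfinal, hLdef, Real.log_exp]
  have h1c : 1 + c = y * (1 + ω₁ + ω₂)^α + (1 - y) * (1 + ω₁)^α := by
    rw [hcdef]; ring
  rw [h1c]
  ring
end

section
/- Let s_1 ∈ (0,1), s_0 = 1 − s_1, let U_1 be uniform on [0,1], and define the simple bridge b(y) = s_0 y + s_1·1{U_1 ≤ y} for y ∈ [0,1], with right-continuous inverse b^{−1}(r) = inf{v ∈ [0,1] : b(v) > r}. If U' is uniform on [0,1] independent of U_1, then P(b^{−1}(U') = U_1) = s_1, and conditionally on b^{−1}(U') ≠ U_1, the random variable b^{−1}(U') is uniform on [0,1]. -/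
open MeasureTheory ProbabilityTheory

/-- Right-continuous inverse of the simple bridge `b(v) = (1-s₁)v + s₁·1{u ≤ v}`
with a single atom of mass `s₁` at location `u`. -/
noncomputable def simpleBridgeInv (s₁ u r : ℝ) : ℝ :=
  sInf {v : ℝ | v ∈ Set.Icc (0 : ℝ) 1 ∧ r < (1 - s₁) * v + s₁ * (if u ≤ v then 1 else 0)}

open Set

section aux
variable {s₁ u r : ℝ}

lemma sbi_mid (hs : s₁ ∈ Set.Ioo (0:ℝ) 1) (hu : u ∈ Set.Icc (0:ℝ) 1)
    (h1 : (1 - s₁) * u ≤ r) (h2 : r < (1 - s₁) * u + s₁) :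
    simpleBridgeInv s₁ u r = u := by
  unfold simpleBridgeInv
  apply le_antisymm
  · refine csInf_le ⟨0, fun v hv => hv.1.1⟩ ⟨hu, ?_⟩
    rw [if_pos le_rfl]; linarith
  · refine le_csInf ⟨u, hu, ?_⟩ ?_
    · rw [if_pos le_rfl]; linarith
    rintro v ⟨hv, hcond⟩
    by_contra h
    push_neg at h
    rw [if_neg (not_le.2 h)] at hcond
    nlinarith [hv.1, hs.2]

lemma sbi_low (hs : s₁ ∈ Set.Ioo (0:ℝ) 1) (hu1 : u ≤ 1) (h0 : 0 ≤ r)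
    (h : r < (1 - s₁) * u) :
    simpleBridgeInv s₁ u r = r / (1 - s₁) := by
  have hs₀ : (0:ℝ) < 1 - s₁ := by linarith [hs.2]
  have hcu : r / (1 - s₁) < u := by rw [div_lt_iff₀ hs₀]; linarith [mul_comm (1 - s₁) u]
  have hT : {v : ℝ | v ∈ Set.Icc (0 : ℝ) 1 ∧ r < (1 - s₁) * v + s₁ * (if u ≤ v then 1 else 0)}
      = Set.Ioc (r / (1 - s₁)) 1 := by
    ext v
    constructor
    · rintro ⟨⟨hv0, hv1⟩, hc⟩
      refine ⟨?_, hv1⟩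
      by_cases h' : u ≤ v
      · exact lt_of_lt_of_le hcu h'
      · rw [if_neg h'] at hc
        rw [div_lt_iff₀ hs₀]
        nlinarith
    · rintro ⟨hv1, hv2⟩
      have hv0 : 0 ≤ v := le_trans (div_nonneg h0 hs₀.le) hv1.le
      refine ⟨⟨hv0, hv2⟩, ?_⟩
      by_cases h' : u ≤ v
      · rw [if_pos h']
        nlinarith [mul_nonneg hs₀.le (sub_nonneg.2 h'), hs.1, hs.2]
      · rw [if_neg h']
        have := (div_lt_iff₀ hs₀).1 hv1
        nlinarith
  rw [simpleBridgeInv, hT, csInf_Ioc (lt_of_lt_of_le hcu hu1)]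

lemma sbi_high (hs : s₁ ∈ Set.Ioo (0:ℝ) 1) (hu0 : 0 ≤ u)
    (h1 : (1 - s₁) * u + s₁ < r) (h2 : r < 1) :
    simpleBridgeInv s₁ u r = (r - s₁) / (1 - s₁) := by
  have hs₀ : (0:ℝ) < 1 - s₁ := by linarith [hs.2]
  have hcu : u < (r - s₁) / (1 - s₁) := by rw [lt_div_iff₀ hs₀]; nlinarith
  have hc1 : (r - s₁) / (1 - s₁) < 1 := by rw [div_lt_iff₀ hs₀]; linarith
  have hT : {v : ℝ | v ∈ Set.Icc (0 : ℝ) 1 ∧ r < (1 - s₁) * v + s₁ * (if u ≤ v then 1 else 0)}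
      = Set.Ioc ((r - s₁) / (1 - s₁)) 1 := by
    ext v
    constructor
    · rintro ⟨⟨hv0, hv1⟩, hc⟩
      refine ⟨?_, hv1⟩
      by_cases h' : u ≤ v
      · rw [if_pos h'] at hc
        rw [div_lt_iff₀ hs₀]
        nlinarith
      · rw [if_neg h'] at hc
        push_neg at h'
        nlinarith [mul_nonneg hs₀.le (sub_nonneg.2 h'.le), hs.1, hs.2]
    · rintro ⟨hv1, hv2⟩
      have huv : u < v := lt_trans hcu hv1
      refine ⟨⟨le_trans hu0 huv.le, hv2⟩, ?_⟩
      rw [if_pos huv.le]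
      have := (div_lt_iff₀ hs₀).1 hv1
      nlinarith
  rw [simpleBridgeInv, hT, csInf_Ioc hc1]

end aux

section iffs
variable {s₁ u r y : ℝ}

lemma sbi_iff1 (hs : s₁ ∈ Set.Ioo (0:ℝ) 1) (hu : u ∈ Set.Icc (0:ℝ) 1)
    (hr : r ∈ Set.Icc (0:ℝ) 1) (hrne1 : r ≠ 1) (hrne : r ≠ (1 - s₁) * u + s₁) :
    simpleBridgeInv s₁ u r = u ↔ ((1 - s₁) * u ≤ r ∧ r < (1 - s₁) * u + s₁) := by
  have hs₀ : (0:ℝ) < 1 - s₁ := by linarith [hs.2]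
  constructor
  · intro h
    rcases lt_or_ge r ((1 - s₁) * u) with hlow | h1
    · rw [sbi_low hs hu.2 hr.1 hlow] at h
      have : r / (1 - s₁) < u := by rw [div_lt_iff₀ hs₀]; linarith [mul_comm (1 - s₁) u]
      exact absurd h this.ne
    · rcases lt_or_ge r ((1 - s₁) * u + s₁) with h2 | h2
      · exact ⟨h1, h2⟩
      · have h2' : (1 - s₁) * u + s₁ < r := lt_of_le_of_ne h2 (Ne.symm hrne)
        have hr1 : r < 1 := lt_of_le_of_ne hr.2 hrne1
        rw [sbi_high hs hu.1 h2' hr1] at h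
        have : u < (r - s₁) / (1 - s₁) := by rw [lt_div_iff₀ hs₀]; nlinarith
        exact absurd h this.ne'
  · rintro ⟨h1, h2⟩
    exact sbi_mid hs hu h1 h2

lemma sbi_iff2 (hs : s₁ ∈ Set.Ioo (0:ℝ) 1) (hu : u ∈ Set.Icc (0:ℝ) 1)
    (hr : r ∈ Set.Icc (0:ℝ) 1) (hrne1 : r ≠ 1) (hrne : r ≠ (1 - s₁) * u + s₁) (y : ℝ) :
    (simpleBridgeInv s₁ u r ≤ y ∧ simpleBridgeInv s₁ u r ≠ u) ↔
      ((r < (1 - s₁) * u ∧ r ≤ (1 - s₁) * y) ∨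
       ((1 - s₁) * u + s₁ < r ∧ r ≤ (1 - s₁) * y + s₁)) := by
  have hs₀ : (0:ℝ) < 1 - s₁ := by linarith [hs.2]
  constructor
  · rintro ⟨hle, hne⟩
    rcases lt_or_ge r ((1 - s₁) * u) with hlow | h1
    · left
      refine ⟨hlow, ?_⟩
      rw [sbi_low hs hu.2 hr.1 hlow] at hle
      rw [div_le_iff₀ hs₀] at hle
      nlinarith
    · rcases lt_or_ge r ((1 - s₁) * u + s₁) with h2 | h2
      · exact absurd (sbi_mid hs hu h1 h2) hne
      · have h2' : (1 - s₁) * u + s₁ < r := lt_of_le_of_ne h2 (Ne.symm hrne)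
        have hr1 : r < 1 := lt_of_le_of_ne hr.2 hrne1
        right
        refine ⟨h2', ?_⟩
        rw [sbi_high hs hu.1 h2' hr1] at hle
        rw [div_le_iff₀ hs₀] at hle
        nlinarith
  · rintro (⟨ha, hb⟩ | ⟨ha, hb⟩)
    · rw [sbi_low hs hu.2 hr.1 ha]
      constructor
      · rw [div_le_iff₀ hs₀]; nlinarith
      · have : r / (1 - s₁) < u := by rw [div_lt_iff₀ hs₀]; nlinarith
        exact this.ne
    · have hr1 : r < 1 := lt_of_le_of_ne hr.2 hrne1
      rw [sbi_high hs hu.1 ha hr1]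
      constructor
      · rw [div_le_iff₀ hs₀]; nlinarith
      · have : u < (r - s₁) / (1 - s₁) := by rw [lt_div_iff₀ hs₀]; nlinarith
        exact this.ne'

end iffs

section meas
open Filter

variable {s₁ y : ℝ}

lemma measS1 (hs : s₁ ∈ Set.Ioo (0:ℝ) 1) :
    ((volume.restrict (Set.Icc (0:ℝ) 1)).prod (volume.restrict (Set.Icc (0:ℝ) 1)))
      {p : ℝ × ℝ | (1 - s₁) * p.1 ≤ p.2 ∧ p.2 < (1 - s₁) * p.1 + s₁}
      = ENNReal.ofReal s₁ := by
  have hs₀ : (0:ℝ) < 1 - s₁ := by linarith [hs.2]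
  have hS : MeasurableSet {p : ℝ × ℝ | (1 - s₁) * p.1 ≤ p.2 ∧ p.2 < (1 - s₁) * p.1 + s₁} := by
    exact MeasurableSet.inter
      (measurableSet_le (measurable_fst.const_mul _) measurable_snd)
      (measurableSet_lt measurable_snd ((measurable_fst.const_mul _).add_const _))
  rw [Measure.prod_apply hS]
  have hslice : ∀ u ∈ Set.Icc (0:ℝ) 1,
      (volume.restrict (Set.Icc (0:ℝ) 1))
        (Prod.mk u ⁻¹' {p : ℝ × ℝ | (1 - s₁) * p.1 ≤ p.2 ∧ p.2 < (1 - s₁) * p.1 + s₁})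
        = ENNReal.ofReal s₁ := by
    intro u hu
    have hpre : Prod.mk u ⁻¹' {p : ℝ × ℝ | (1 - s₁) * p.1 ≤ p.2 ∧ p.2 < (1 - s₁) * p.1 + s₁}
        = Set.Ico ((1 - s₁) * u) ((1 - s₁) * u + s₁) := rfl
    rw [hpre, Measure.restrict_apply measurableSet_Ico]
    have hsub : Set.Ico ((1 - s₁) * u) ((1 - s₁) * u + s₁) ⊆ Set.Icc (0:ℝ) 1 := by
      intro r hr
      have h1 : (0:ℝ) ≤ (1 - s₁) * u := mul_nonneg hs₀.le hu.1
      have h2 : (1 - s₁) * u + s₁ ≤ 1 := by nlinarith [hu.2, hs.1]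
      exact ⟨le_trans h1 hr.1, le_trans hr.2.le h2⟩
    rw [Set.inter_eq_left.2 hsub, Real.volume_Ico]
    congr 1; ring
  rw [show (∫⁻ x, (volume.restrict (Set.Icc (0:ℝ) 1))
        (Prod.mk x ⁻¹' {p : ℝ × ℝ | (1 - s₁) * p.1 ≤ p.2 ∧ p.2 < (1 - s₁) * p.1 + s₁})
        ∂(volume.restrict (Set.Icc (0:ℝ) 1)))
      = ∫⁻ _ in Set.Icc (0:ℝ) 1, ENNReal.ofReal s₁ ∂volume from
    setLIntegral_congr_fun measurableSet_Icc hslice]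
  rw [setLIntegral_const, Real.volume_Icc]
  simp

lemma measS2 (hs : s₁ ∈ Set.Ioo (0:ℝ) 1) (hy : y ∈ Set.Icc (0:ℝ) 1) :
    ((volume.restrict (Set.Icc (0:ℝ) 1)).prod (volume.restrict (Set.Icc (0:ℝ) 1)))
      {p : ℝ × ℝ | (p.2 < (1 - s₁) * p.1 ∧ p.2 ≤ (1 - s₁) * y) ∨
        ((1 - s₁) * p.1 + s₁ < p.2 ∧ p.2 ≤ (1 - s₁) * y + s₁)}
      = ENNReal.ofReal ((1 - s₁) * y) := by
  have hs₀ : (0:ℝ) < 1 - s₁ := by linarith [hs.2]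
  have hσ : (0:ℝ) < s₁ := hs.1
  set S : Set (ℝ × ℝ) := {p : ℝ × ℝ | (p.2 < (1 - s₁) * p.1 ∧ p.2 ≤ (1 - s₁) * y) ∨
        ((1 - s₁) * p.1 + s₁ < p.2 ∧ p.2 ≤ (1 - s₁) * y + s₁)} with hSdef
  have hS : MeasurableSet S := by
    exact MeasurableSet.union
      ((measurableSet_lt measurable_snd (measurable_fst.const_mul _)).inter
        (measurableSet_le measurable_snd measurable_const))
      ((measurableSet_lt ((measurable_fst.const_mul _).add_const _) measurable_snd).inter
        (measurableSet_le measurable_snd measurable_const))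
  rw [Measure.prod_apply hS]
  have hslice : ∀ u ∈ Set.Icc (0:ℝ) 1,
      (volume.restrict (Set.Icc (0:ℝ) 1)) (Prod.mk u ⁻¹' S)
        = ENNReal.ofReal ((1 - s₁) * y) := by
    intro u hu
    have hpre : Prod.mk u ⁻¹' S = {r : ℝ | (r < (1 - s₁) * u ∧ r ≤ (1 - s₁) * y) ∨
        ((1 - s₁) * u + s₁ < r ∧ r ≤ (1 - s₁) * y + s₁)} := rfl
    have hms : MeasurableSet {r : ℝ | (r < (1 - s₁) * u ∧ r ≤ (1 - s₁) * y) ∨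
        ((1 - s₁) * u + s₁ < r ∧ r ≤ (1 - s₁) * y + s₁)} := by
      have heq : {r : ℝ | (r < (1 - s₁) * u ∧ r ≤ (1 - s₁) * y) ∨
          ((1 - s₁) * u + s₁ < r ∧ r ≤ (1 - s₁) * y + s₁)}
          = (Set.Iio ((1 - s₁) * u) ∩ Set.Iic ((1 - s₁) * y)) ∪
            (Set.Ioi ((1 - s₁) * u + s₁) ∩ Set.Iic ((1 - s₁) * y + s₁)) := rfl
      rw [heq]
      exact (measurableSet_Iio.inter measurableSet_Iic).union
        (measurableSet_Ioi.inter measurableSet_Iic)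
    rw [hpre, Measure.restrict_apply hms]
    have h1 : (0:ℝ) ≤ (1 - s₁) * u := mul_nonneg hs₀.le hu.1
    have h0y : (0:ℝ) ≤ (1 - s₁) * y := mul_nonneg hs₀.le hy.1
    have h3 : (1 - s₁) * y + s₁ ≤ 1 := by nlinarith [hy.2]
    rcases le_or_gt u y with huy | huy
    · have h2 : (1 - s₁) * u ≤ (1 - s₁) * y := by nlinarith
      have hset : {r : ℝ | (r < (1 - s₁) * u ∧ r ≤ (1 - s₁) * y) ∨
          ((1 - s₁) * u + s₁ < r ∧ r ≤ (1 - s₁) * y + s₁)} ∩ Set.Icc (0:ℝ) 1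
          = Set.Ico 0 ((1 - s₁) * u) ∪ Set.Ioc ((1 - s₁) * u + s₁) ((1 - s₁) * y + s₁) := by
        ext r
        simp only [Set.mem_inter_iff, Set.mem_setOf_eq, Set.mem_Icc, Set.mem_union,
          Set.mem_Ico, Set.mem_Ioc]
        constructor
        · rintro ⟨(⟨a, b⟩ | ⟨a, b⟩), c, d⟩
          · exact Or.inl ⟨c, a⟩
          · exact Or.inr ⟨a, b⟩
        · rintro (⟨a, b⟩ | ⟨a, b⟩)
          · exact ⟨Or.inl ⟨b, by linarith⟩, a, by linarith⟩
          · exact ⟨Or.inr ⟨a, b⟩, by linarith, by linarith⟩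
      rw [hset, measure_union ?_ measurableSet_Ioc, Real.volume_Ico, Real.volume_Ioc,
        ← ENNReal.ofReal_add (by linarith) (by linarith)]
      · congr 1; ring
      · rw [Set.disjoint_left]
        intro r hr hr'
        simp only [Set.mem_Ico, Set.mem_Ioc] at hr hr'
        linarith [hr.2, hr'.1]
    · have hlt : (1 - s₁) * y < (1 - s₁) * u := by nlinarith
      have hset : {r : ℝ | (r < (1 - s₁) * u ∧ r ≤ (1 - s₁) * y) ∨
          ((1 - s₁) * u + s₁ < r ∧ r ≤ (1 - s₁) * y + s₁)} ∩ Set.Icc (0:ℝ) 1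
          = Set.Icc 0 ((1 - s₁) * y) := by
        ext r
        simp only [Set.mem_inter_iff, Set.mem_setOf_eq, Set.mem_Icc]
        constructor
        · rintro ⟨(⟨a, b⟩ | ⟨a, b⟩), c, d⟩
          · exact ⟨c, b⟩
          · exfalso; linarith
        · rintro ⟨ha, hb⟩
          exact ⟨Or.inl ⟨by linarith, hb⟩, ha, by linarith⟩
      rw [hset, Real.volume_Icc]
      congr 1; ring
  rw [show (∫⁻ x, (volume.restrict (Set.Icc (0:ℝ) 1)) (Prod.mk x ⁻¹' S)
        ∂(volume.restrict (Set.Icc (0:ℝ) 1)))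
      = ∫⁻ _ in Set.Icc (0:ℝ) 1, ENNReal.ofReal ((1 - s₁) * y) ∂volume from
    setLIntegral_congr_fun measurableSet_Icc hslice]
  rw [setLIntegral_const, Real.volume_Icc]
  simp

end meas


/-- For the simple bridge with atom of mass `s₁ ∈ (0,1)` at an independent uniform
location `U₁`, and `U'` an independent uniform: `P(b⁻¹(U') = U₁) = s₁`, and
conditionally on `b⁻¹(U') ≠ U₁`, the random variable `b⁻¹(U')` is uniform on `[0,1]`
(i.e. `P(b⁻¹(U') ≤ y, b⁻¹(U') ≠ U₁) = y(1-s₁)` for `y ∈ [0,1]`). -/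
theorem stmt16 {Ω : Type*} [MeasureSpace Ω] [IsProbabilityMeasure (ℙ : Measure Ω)]
    (s₁ : ℝ) (hs₁ : s₁ ∈ Set.Ioo (0 : ℝ) 1)
    (U₁ U' : Ω → ℝ) (hU₁m : Measurable U₁) (hU'm : Measurable U')
    (hU₁ : Measure.map U₁ ℙ = volume.restrict (Set.Icc (0 : ℝ) 1))
    (hU' : Measure.map U' ℙ = volume.restrict (Set.Icc (0 : ℝ) 1))
    (hind : IndepFun U₁ U' ℙ) :
    ℙ {a | simpleBridgeInv s₁ (U₁ a) (U' a) = U₁ a} = ENNReal.ofReal s₁ ∧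
    ∀ y ∈ Set.Icc (0 : ℝ) 1,
      ℙ {a | simpleBridgeInv s₁ (U₁ a) (U' a) ≤ y ∧ simpleBridgeInv s₁ (U₁ a) (U' a) ≠ U₁ a}
        = ENNReal.ofReal (y * (1 - s₁)) := by
  have hs₀ : (0:ℝ) < 1 - s₁ := by linarith [hs₁.2]
  have hJm : Measurable (fun a => (U₁ a, U' a)) := hU₁m.prodMk hU'm
  have hmap : Measure.map (fun a => (U₁ a, U' a)) ℙ
      = (volume.restrict (Set.Icc (0:ℝ) 1)).prod (volume.restrict (Set.Icc (0:ℝ) 1)) := by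
    rw [(ProbabilityTheory.indepFun_iff_map_prod_eq_prod_map_map hU₁m.aemeasurable
      hU'm.aemeasurable).1 hind, hU₁, hU']
  have key : ∀ S : Set (ℝ × ℝ), MeasurableSet S →
      ℙ ((fun a => (U₁ a, U' a)) ⁻¹' S)
        = ((volume.restrict (Set.Icc (0:ℝ) 1)).prod (volume.restrict (Set.Icc (0:ℝ) 1))) S := by
    intro S hS
    rw [← hmap, Measure.map_apply hJm hS]
  have hg1 : ∀ᵐ a ∂ℙ, U₁ a ∈ Set.Icc (0:ℝ) 1 := by
    have h : ℙ (U₁ ⁻¹' (Set.Icc (0:ℝ) 1)ᶜ) = 0 := by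
      rw [← Measure.map_apply hU₁m measurableSet_Icc.compl, hU₁,
        Measure.restrict_apply measurableSet_Icc.compl, Set.compl_inter_self]
      simp
    rw [ae_iff]
    exact h
  have hg2 : ∀ᵐ a ∂ℙ, U' a ∈ Set.Icc (0:ℝ) 1 := by
    have h : ℙ (U' ⁻¹' (Set.Icc (0:ℝ) 1)ᶜ) = 0 := by
      rw [← Measure.map_apply hU'm measurableSet_Icc.compl, hU',
        Measure.restrict_apply measurableSet_Icc.compl, Set.compl_inter_self]
      simp
    rw [ae_iff]
    exact h
  have hg3 : ∀ᵐ a ∂ℙ, U' a ≠ 1 := by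
    have h : ℙ (U' ⁻¹' {(1:ℝ)}) = 0 := by
      rw [← Measure.map_apply hU'm (measurableSet_singleton 1), hU',
        Measure.restrict_apply (measurableSet_singleton 1)]
      exact measure_mono_null Set.inter_subset_left Real.volume_singleton
    rw [ae_iff]
    simp only [ne_eq, not_not]; exact h
  have hL : MeasurableSet {p : ℝ × ℝ | p.2 = (1 - s₁) * p.1 + s₁} :=
    measurableSet_eq_fun measurable_snd ((measurable_fst.const_mul _).add_const _)
  have hLnull : ((volume.restrict (Set.Icc (0:ℝ) 1)).prod (volume.restrict (Set.Icc (0:ℝ) 1)))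
      {p : ℝ × ℝ | p.2 = (1 - s₁) * p.1 + s₁} = 0 := by
    rw [Measure.prod_apply hL]
    have hsl : ∀ u : ℝ, (volume.restrict (Set.Icc (0:ℝ) 1))
        (Prod.mk u ⁻¹' {p : ℝ × ℝ | p.2 = (1 - s₁) * p.1 + s₁}) = 0 := by
      intro u
      have hpre : Prod.mk u ⁻¹' {p : ℝ × ℝ | p.2 = (1 - s₁) * p.1 + s₁}
          = {(1 - s₁) * u + s₁} := by
        ext r; simp [Set.mem_singleton_iff]
      rw [hpre, Measure.restrict_apply (measurableSet_singleton _)]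
      exact measure_mono_null Set.inter_subset_left Real.volume_singleton
    simp [hsl]
  have hg4 : ∀ᵐ a ∂ℙ, U' a ≠ (1 - s₁) * U₁ a + s₁ := by
    have h := (key _ hL).trans hLnull
    rw [ae_iff]
    simpa [not_not] using h
  constructor
  · have hS1 : MeasurableSet {p : ℝ × ℝ | (1 - s₁) * p.1 ≤ p.2 ∧ p.2 < (1 - s₁) * p.1 + s₁} :=
      MeasurableSet.inter
        (measurableSet_le (measurable_fst.const_mul _) measurable_snd)
        (measurableSet_lt measurable_snd ((measurable_fst.const_mul _).add_const _))
    have e1 : ℙ {a | simpleBridgeInv s₁ (U₁ a) (U' a) = U₁ a}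
        = ℙ ((fun a => (U₁ a, U' a)) ⁻¹'
            {p : ℝ × ℝ | (1 - s₁) * p.1 ≤ p.2 ∧ p.2 < (1 - s₁) * p.1 + s₁}) := by
      apply measure_congr
      rw [Filter.eventuallyEq_set]
      filter_upwards [hg1, hg2, hg3, hg4] with a h1 h2 h3 h4
      simpa using sbi_iff1 hs₁ h1 h2 h3 h4
    rw [e1, key _ hS1, measS1 hs₁]
  · intro y hy
    have hS2 : MeasurableSet {p : ℝ × ℝ | (p.2 < (1 - s₁) * p.1 ∧ p.2 ≤ (1 - s₁) * y) ∨
        ((1 - s₁) * p.1 + s₁ < p.2 ∧ p.2 ≤ (1 - s₁) * y + s₁)} :=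
      MeasurableSet.union
        ((measurableSet_lt measurable_snd (measurable_fst.const_mul _)).inter
          (measurableSet_le measurable_snd measurable_const))
        ((measurableSet_lt ((measurable_fst.const_mul _).add_const _) measurable_snd).inter
          (measurableSet_le measurable_snd measurable_const))
    have e2 : ℙ {a | simpleBridgeInv s₁ (U₁ a) (U' a) ≤ y ∧
          simpleBridgeInv s₁ (U₁ a) (U' a) ≠ U₁ a}
        = ℙ ((fun a => (U₁ a, U' a)) ⁻¹'
            {p : ℝ × ℝ | (p.2 < (1 - s₁) * p.1 ∧ p.2 ≤ (1 - s₁) * y) ∨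
              ((1 - s₁) * p.1 + s₁ < p.2 ∧ p.2 ≤ (1 - s₁) * y + s₁)}) := by
      apply measure_congr
      rw [Filter.eventuallyEq_set]
      filter_upwards [hg1, hg2, hg3, hg4] with a h1 h2 h3 h4
      simpa using sbi_iff2 hs₁ h1 h2 h3 h4 y
    rw [e2, key _ hS2, measS2 hs₁ hy, mul_comm]
end
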